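/- For every nonempty closed subset C of the Cantor space 2^ℕ, there exists a connected, infinite, 3-regular graph Γ_C such that the end space E(Γ_C) is homeomorphic to C and every end of Γ_C is accumulated by loops, i.e., E_ℓ(Γ_C) = E(Γ_C). -/

import Mathlib

open TopologicalSpace

/-- A based (multi)graph with vertex set `ℕ` and edge set `ℕ`: each edge is an
unordered pair of vertices (self-loops and multiple edges allowed), with a basepoint. -/
structure BasedGraph where
  edges : ℕ → Sym2 ℕ
  base : ℕ

namespace BasedGraph

/-- Two vertices are adjacent if some edge joins them. -/
def Adj (G : BasedGraph) (u v : ℕ) : Prop := ∃ e : ℕ, G.edges e = s(u, v)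

/-- There is a walk of length `n` from `u` to `v`. -/
def ReachesIn (G : BasedGraph) (n u v : ℕ) : Prop :=
  ∃ f : ℕ → ℕ, f 0 = u ∧ f n = v ∧ ∀ i < n, G.Adj (f i) (f (i + 1))

/-- Connectedness: every pair of vertices is joined by a walk. -/
def Connected (G : BasedGraph) : Prop := ∀ u v : ℕ, ∃ n, G.ReachesIn n u v

/-- Local finiteness: each vertex meets only finitely many edges. -/
def LocallyFinite (G : BasedGraph) : Prop := ∀ v : ℕ, {e : ℕ | v ∈ G.edges e}.Finite

/-- Degree of a vertex: incident edges, with self-loops counted twice. -/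
noncomputable def degree (G : BasedGraph) (v : ℕ) : ℕ :=
  {e : ℕ | v ∈ G.edges e}.ncard + {e : ℕ | G.edges e = s(v, v)}.ncard

/-- `k`-regular: locally finite with every vertex of degree exactly `k`. -/
def Regular (G : BasedGraph) (k : ℕ) : Prop := G.LocallyFinite ∧ ∀ v, G.degree v = k

/-- Path metric distance (length of a shortest walk). -/
noncomputable def dist (G : BasedGraph) (u v : ℕ) : ℕ := sInf {n | G.ReachesIn n u v}

/-- Vertices of the ball of radius `r` around the basepoint. -/
def ballV (G : BasedGraph) (r : ℕ) : Set ℕ := {v | G.dist G.base v ≤ r}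

/-- Edges of the ball of radius `r`: both endpoints lie in the vertex ball. -/
def ballE (G : BasedGraph) (r : ℕ) : Set ℕ := {e | ∀ v ∈ G.edges e, v ∈ G.ballV r}

/-- The balls of radius `r` around the basepoints of `G₁`, `G₂` are isomorphic
as based graphs. -/
def BallIso (r : ℕ) (G₁ G₂ : BasedGraph) : Prop :=
  ∃ (σ : G₁.ballV r ≃ G₂.ballV r) (τ : G₁.ballE r ≃ G₂.ballE r),
    (∀ h₁ : G₁.base ∈ G₁.ballV r, (σ ⟨G₁.base, h₁⟩ : ℕ) = G₂.base) ∧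
    ∀ (e : G₁.ballE r) (u v : ℕ) (hu : u ∈ G₁.ballV r) (hv : v ∈ G₁.ballV r),
      G₁.edges ↑e = s(u, v) →
        G₂.edges ↑(τ e) = s((σ ⟨u, hu⟩ : ℕ), (σ ⟨v, hv⟩ : ℕ))

/-- Based isomorphism of graphs. -/
def Iso (G₁ G₂ : BasedGraph) : Prop :=
  ∃ (σ : ℕ ≃ ℕ) (τ : ℕ ≃ ℕ), σ G₁.base = G₂.base ∧
    ∀ e : ℕ, G₂.edges (τ e) = Sym2.map σ (G₁.edges e)

/-- `d(Γ₁,Γ₂) = inf { 2^{-r} : B_r(Γ₁) ≅ B_r(Γ₂) }` (with `1 = 2⁻⁰` as default cap). -/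
noncomputable def gdist (G₁ G₂ : BasedGraph) : ℝ :=
  sInf (insert 1 {x : ℝ | ∃ r : ℕ, BallIso r G₁ G₂ ∧ x = (2 : ℝ)⁻¹ ^ r})

/-- Reachability by a walk avoiding a set `S` of vertices. -/
def ReachAvoid (G : BasedGraph) (S : Set ℕ) (u v : ℕ) : Prop :=
  ∃ (n : ℕ) (f : ℕ → ℕ), f 0 = u ∧ f n = v ∧ (∀ i ≤ n, f i ∉ S) ∧
    ∀ i < n, G.Adj (f i) (f (i + 1))

/-- The end space of `G`: inverse limit over finite (= compact) subgraphs of the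
(discrete, finite) sets of connected components of the complement; a point assigns
to each finite vertex set `S` (the characteristic function of) a connected component
of `G ∖ S`, compatibly. -/
def EndSpace (G : BasedGraph) : Type :=
  {e : Finset ℕ → ℕ → Bool //
    (∀ S : Finset ℕ, ∃ v ∉ (S : Set ℕ), ∀ w, e S w = true ↔ G.ReachAvoid (↑S) v w) ∧
    ∀ S T : Finset ℕ, S ⊆ T → ∀ w, e T w = true → e S w = true}

instance (G : BasedGraph) : TopologicalSpace (EndSpace G) :=
  inferInstanceAs (TopologicalSpace
    {e : Finset ℕ → ℕ → Bool //
    (∀ S : Finset ℕ, ∃ v ∉ (S : Set ℕ), ∀ w, e S w = true ↔ G.ReachAvoid (↑S) v w) ∧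
    ∀ S T : Finset ℕ, S ⊆ T → ∀ w, e T w = true → e S w = true})

/-- The (induced subgraph on) `A` has first Betti number (rank) at least `n`:
some finite subgraph `(VF, EF)` inside `A` has `#EF - #VF + 1 ≥ n`. -/
def RankGe (G : BasedGraph) (A : Set ℕ) (n : ℕ) : Prop :=
  ∃ VF EF : Finset ℕ, (↑VF : Set ℕ) ⊆ A ∧
    (∀ e ∈ EF, ∀ v, v ∈ G.edges e → v ∈ VF) ∧ VF.card + n ≤ EF.card + 1

/-- An end is accumulated by loops if each of its neighborhoods has infinite rank. -/
def AccumulatedByLoops (G : BasedGraph) (e : EndSpace G) : Prop :=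
  ∀ S : Finset ℕ, ∀ n : ℕ, RankGe G {w | e.1 S w = true} n

/-- One-ended: the end space is a single point. -/
def OneEnded (G : BasedGraph) : Prop :=
  Nonempty (EndSpace G) ∧ ∀ e₁ e₂ : EndSpace G, e₁ = e₂

/-- Any two vertices at distance exactly `n` from the basepoint are joined by a
path avoiding the open ball of radius `n`. -/
def OutsideConnected (G : BasedGraph) (n : ℕ) : Prop :=
  ∀ u v : ℕ, G.dist G.base u = n → G.dist G.base v = n →
    G.ReachAvoid {w | G.dist G.base w < n} u v

end BasedGraph

open BasedGraph

/-- The space `𝒢_k` of based, connected, infinite (vertex set `ℕ`), `k`-regular graphs. -/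
def Gspace (k : ℕ) : Type := {G : BasedGraph // G.Connected ∧ G.Regular k}

/-- The metric topology on `𝒢_k`, generated by the metric balls of `gdist`. -/
instance (k : ℕ) : TopologicalSpace (Gspace k) :=
  generateFrom {U | ∃ (Γ : Gspace k) (ε : ℝ), 0 < ε ∧ U = {Δ | gdist Γ.1 Δ.1 < ε}}

/-! ### Auxiliary construction -/

namespace CantorG3

attribute [local instance] Classical.propDecidable

noncomputable section

/-- reversed prefix of length `n` -/
def pre (x : ℕ → Bool) : ℕ → List Bool
  | 0 => []
  | n+1 => x n :: pre x n

@[simp] lemma pre_length (x : ℕ → Bool) (n : ℕ) : (pre x n).length = n := by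
  induction n with
  | zero => rfl
  | succ n ih => simp [pre, ih]

lemma pre_drop (x : ℕ → Bool) (n k : ℕ) : (pre x n).drop k = pre x (n - k) := by
  induction n generalizing k with
  | zero => simp [pre]
  | succ n ih =>
    cases k with
    | zero => simp
    | succ k => simpa [pre] using ih k

lemma pre_eq_iff (x y : ℕ → Bool) (n : ℕ) :
    pre x n = pre y n ↔ ∀ i < n, x i = y i := by
  induction n with
  | zero => simp [pre]
  | succ n ih =>
    simp only [pre, List.cons.injEq, ih]
    constructor
    · rintro ⟨h1, h2⟩ i hi
      rcases Nat.lt_succ_iff_lt_or_eq.1 hi with h | h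
      · exact h2 i h
      · subst h; exact h1
    · intro h
      exact ⟨h n (Nat.lt_succ_self n), fun i hi => h i (hi.trans (Nat.lt_succ_self n))⟩

variable (C : Set (ℕ → Bool))

/-- the tree of (reversed) prefixes of elements of `C` -/
def InT (s : List Bool) : Prop := ∃ x ∈ C, pre x s.length = s

lemma InT_pre {x : ℕ → Bool} (hx : x ∈ C) (n : ℕ) : InT C (pre x n) :=
  ⟨x, hx, by simp⟩

lemma InT_nil (hne : C.Nonempty) : InT C [] := by
  obtain ⟨x, hx⟩ := hne
  exact ⟨x, hx, rfl⟩

lemma InT_tail {b : Bool} {s : List Bool} (h : InT C (b :: s)) : InT C s := by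
  obtain ⟨x, hx, hp⟩ := h
  refine ⟨x, hx, ?_⟩
  have := congrArg (List.drop 1) hp
  simpa [pre_drop, pre] using this

lemma InT_drop {s : List Bool} (h : InT C s) (k : ℕ) : InT C (s.drop k) := by
  induction k generalizing s with
  | zero => simpa using h
  | succ k ih =>
    cases s with
    | nil => simpa using h
    | cons b t =>
      have := InT_tail C h
      simpa [List.drop_succ_cons] using ih this

lemma InT_child {s : List Bool} (h : InT C s) : ∃ b, InT C (b :: s) := by
  obtain ⟨x, hx, hp⟩ := h
  refine ⟨x s.length, x, hx, ?_⟩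
  simp [pre, hp]

/-- branching node -/
def br (s : List Bool) : Prop := InT C (false :: s) ∧ InT C (true :: s)

/-- gadget size -/
def sz (s : List Bool) : ℕ := if br C s then 3 else 2

/-- number of edges indexed at a node -/
def enum (s : List Bool) : ℕ := if br C s then 4 else 3

lemma sz_pos (s : List Bool) : 2 ≤ sz C s := by unfold sz; split <;> omega
lemma sz_le (s : List Bool) : sz C s ≤ 3 := by unfold sz; split <;> omega
lemma enum_ge (s : List Bool) : 3 ≤ enum C s := by unfold enum; split <;> omega
lemma sz_of_br {s : List Bool} (h : br C s) : sz C s = 3 := if_pos h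
lemma sz_of_not_br {s : List Bool} (h : ¬ br C s) : sz C s = 2 := if_neg h
lemma enum_eq_sz_add_one (s : List Bool) : enum C s = sz C s + 1 := by
  unfold enum sz; split <;> rfl

/-- raw vertex/edge carrier -/
abbrev VT := Option (List Bool × ℕ)

def Vok : VT → Prop
  | none => True
  | some (s, i) => InT C s ∧ i < sz C s

def Eok : VT → Prop
  | none => True
  | some (s, j) => InT C s ∧ j < enum C s

/-- port in the gadget of `s` to which the child `b :: s` attaches -/
def out (s : List Bool) (b : Bool) : VT := some (s, if br C s then (cond b 2 1) else 0)

/-- the vertex to which the gadget of `s` attaches upwards -/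
def pport : List Bool → VT
  | [] => none
  | b :: t => out C t b

/-- raw edge map -/
def E0 : VT → Sym2 VT
  | none => s(none, none)
  | some (s, 0) => s(some (s,0), pport C s)
  | some (s, 1) => s(some (s,0), some (s,1))
  | some (s, 2) => if br C s then s(some (s,1), some (s,2)) else s(some (s,1), some (s,1))
  | some (s, _+3) => s(some (s,2), some (s,0))

def lvlV : VT → ℕ
  | none => 0
  | some (s, _) => s.length + 1

def stemV (m : ℕ) : VT → List Bool
  | none => []
  | some (s, _) => s.drop (s.length - m)

@[simp] lemma lvlV_none : lvlV none = 0 := rfl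
@[simp] lemma lvlV_some (s : List Bool) (i : ℕ) : lvlV (some (s, i)) = s.length + 1 := rfl
@[simp] lemma stemV_none (m : ℕ) : stemV m none = [] := rfl
@[simp] lemma stemV_some (m : ℕ) (s : List Bool) (i : ℕ) :
    stemV m (some (s, i)) = s.drop (s.length - m) := rfl

lemma Vok_none : Vok C none := trivial
lemma Vok_some {s : List Bool} {i : ℕ} (hs : InT C s) (hi : i < sz C s) :
    Vok C (some (s, i)) := ⟨hs, hi⟩
lemma Vok_u {s : List Bool} (hs : InT C s) : Vok C (some (s, 0)) :=
  ⟨hs, by have := sz_pos C s; omega⟩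

lemma out_ok {s : List Bool} (h : InT C s) (b : Bool) (hb : InT C (b :: s)) :
    Vok C (out C s b) := by
  unfold out Vok
  refine ⟨h, ?_⟩
  by_cases hbr : br C s
  · simp only [if_pos hbr, sz_of_br C hbr]; cases b <;> simp
  · simp only [if_neg hbr, sz_of_not_br C hbr]; omega

lemma E0_ok {η : VT} (h : Eok C η) : ∀ a ∈ E0 C η, Vok C a := by
  intro a ha
  match η with
  | none => simp [E0] at ha; subst ha; trivial
  | some (s, j) =>
    obtain ⟨hs, hj⟩ := h
    match j with
    | 0 =>
      simp only [E0, Sym2.mem_iff] at ha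
      rcases ha with rfl | rfl
      · exact ⟨hs, by have := sz_pos C s; omega⟩
      · cases s with
        | nil => trivial
        | cons b t =>
          have ht : InT C t := InT_tail C hs
          exact out_ok C ht b hs
    | 1 =>
      simp only [E0, Sym2.mem_iff] at ha
      have h2 := sz_pos C s
      rcases ha with rfl | rfl <;> exact ⟨hs, by omega⟩
    | 2 =>
      by_cases hbr : br C s
      · simp only [E0, if_pos hbr, Sym2.mem_iff] at ha
        have h3 := sz_of_br C hbr
        rcases ha with rfl | rfl <;> exact ⟨hs, by omega⟩
      · simp only [E0, if_neg hbr, Sym2.mem_iff] at ha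
        have h2 := sz_pos C s
        rcases ha with rfl | rfl <;> exact ⟨hs, by omega⟩
    | (k+3) =>
      have hbr : br C s := by
        by_contra hbr
        rw [enum, if_neg hbr] at hj
        omega
      simp only [E0, Sym2.mem_iff] at ha
      have h3 := sz_of_br C hbr
      rcases ha with rfl | rfl <;> exact ⟨hs, by omega⟩


/-! ### walk toolkit -/

section Walks

variable {G : BasedGraph} {S S' : Set ℕ} {u v w : ℕ}

lemma adj_symm (h : G.Adj u v) : G.Adj v u := by
  obtain ⟨e, he⟩ := h
  exact ⟨e, by rw [he, Sym2.eq_swap]⟩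

lemma ra_refl (h : u ∉ S) : G.ReachAvoid S u u :=
  ⟨0, fun _ => u, rfl, rfl, fun i _ => h, fun i hi => absurd hi (Nat.not_lt_zero i)⟩

lemma ra_notMem_left (h : G.ReachAvoid S u v) : u ∉ S := by
  obtain ⟨n, f, h0, hn, hS, _⟩ := h
  subst h0; exact hS 0 (Nat.zero_le n)

lemma ra_notMem_right (h : G.ReachAvoid S u v) : v ∉ S := by
  obtain ⟨n, f, h0, hn, hS, _⟩ := h
  subst hn; exact hS n le_rfl

lemma ra_step (h : G.ReachAvoid S u v) (ha : G.Adj v w) (hw : w ∉ S) :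
    G.ReachAvoid S u w := by
  obtain ⟨n, f, h0, hn, hS, hadj⟩ := h
  refine ⟨n + 1, fun i => if i ≤ n then f i else w, by simpa using h0, by simp, ?_, ?_⟩
  · intro i hi
    by_cases hin : i ≤ n
    · simpa [hin] using hS i hin
    · simpa [hin] using hw
  · intro i hi
    rcases Nat.lt_succ_iff_lt_or_eq.1 hi with hlt | heq
    · have h1 : i ≤ n := hlt.le
      have h2 : i + 1 ≤ n := hlt
      simpa [h1, h2] using hadj i hlt
    · subst heq
      simpa [hn] using ha

lemma ra_symm (h : G.ReachAvoid S u v) : G.ReachAvoid S v u := by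
  obtain ⟨n, f, h0, hn, hS, hadj⟩ := h
  refine ⟨n, fun i => f (n - i), by simpa, by simpa using h0, fun i _ => hS (n - i) (Nat.sub_le n i), ?_⟩
  intro i hi
  show G.Adj (f (n - i)) (f (n - (i+1)))
  have h1 : n - i = (n - (i+1)) + 1 := by omega
  rw [h1]
  exact adj_symm (hadj (n - (i+1)) (by omega))

lemma ra_trans (h1 : G.ReachAvoid S u v) (h2 : G.ReachAvoid S v w) :
    G.ReachAvoid S u w := by
  obtain ⟨n, f, h0, hn, hS, hadj⟩ := h1
  obtain ⟨m, g, g0, gm, gS, gadj⟩ := h2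
  refine ⟨n + m, fun i => if i ≤ n then f i else g (i - n), by simpa using h0, ?_, ?_, ?_⟩
  · by_cases hm : m = 0
    · subst hm; simp only [Nat.add_zero, le_refl, if_pos]
      rw [hn, ← g0]; exact gm
    · have : ¬ (n + m ≤ n) := by omega
      simpa [this] using gm
  · intro i hi
    by_cases hin : i ≤ n
    · simpa [hin] using hS i hin
    · simpa [hin] using gS (i - n) (by omega)
  · intro i hi
    by_cases hin : i + 1 ≤ n
    · have : i ≤ n := by omega
      simpa [this, hin] using hadj i (by omega)
    · by_cases hieq : i ≤ n
      · have hin' : i = n := by omega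
        subst hin'
        simp only [le_refl, if_pos, if_neg hin]
        have : i + 1 - i = 1 := by omega
        rw [this, hn, ← g0]
        by_cases hm : m = 0
        · omega
        · exact gadj 0 (by omega)
      · simp only [if_neg hieq, if_neg hin]
        have h1 : i + 1 - n = (i - n) + 1 := by omega
        rw [h1]
        exact gadj (i - n) (by omega)

lemma ra_mono (hsub : S ⊆ S') (h : G.ReachAvoid S' u v) : G.ReachAvoid S u v := by
  obtain ⟨n, f, h0, hn, hS, hadj⟩ := h
  exact ⟨n, f, h0, hn, fun i hi hmem => hS i hi (hsub hmem), hadj⟩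

lemma ra_adj (ha : G.Adj u v) (hu : u ∉ S) (hv : v ∉ S) : G.ReachAvoid S u v :=
  ra_step (ra_refl hu) ha hv

/-- walk induction: a property invariant under adjacency steps off `S` -/
lemma ra_invariant (P : ℕ → Prop)
    (hstep : ∀ a b, a ∉ S → b ∉ S → G.Adj a b → P a → P b)
    (h : G.ReachAvoid S u v) (hu : P u) : P v := by
  obtain ⟨n, f, h0, hn, hS, hadj⟩ := h
  subst h0 hn
  induction n with
  | zero => exact hu
  | succ n ih =>
    exact hstep (f n) (f (n+1)) (hS n (Nat.le_succ n)) (hS (n+1) le_rfl)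
      (hadj n (Nat.lt_succ_self n))
      (ih (fun i hi => hS i (hi.trans (Nat.le_succ n)))
        (fun i hi => hadj i (hi.trans (Nat.lt_succ_self n))))

end Walks

/-- valid vertices -/
def V := {a : VT // Vok C a}
/-- valid edges -/
def E := {a : VT // Eok C a}

instance : Countable (V C) := Subtype.countable
instance : Countable (E C) := Subtype.countable

lemma infinite_V (hne : C.Nonempty) : Infinite (V C) := by
  obtain ⟨x, hx⟩ := hne
  refine Infinite.of_injective (fun n => (⟨some (pre x n, 0), InT_pre C hx n, by have := sz_pos C (pre x n); omega⟩ : V C)) ?_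
  intro m n h
  have := congrArg (fun v : V C => lvlV v.1) h
  simpa [lvlV] using this

lemma infinite_E (hne : C.Nonempty) : Infinite (E C) := by
  obtain ⟨x, hx⟩ := hne
  refine Infinite.of_injective (fun n => (⟨some (pre x n, 0), InT_pre C hx n, by have := enum_ge C (pre x n); omega⟩ : E C)) ?_
  intro m n h
  have := congrArg (fun v : E C => lvlV v.1) h
  simpa [lvlV] using this

variable (hne : C.Nonempty)

/-- vertex enumeration -/
def σV : V C ≃ ℕ :=
  haveI := infinite_V C hne
  haveI := (nonempty_denumerable (V C)).some
  Denumerable.eqv (V C)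

/-- edge enumeration -/
def τE : E C ≃ ℕ :=
  haveI := infinite_E C hne
  haveI := (nonempty_denumerable (E C)).some
  Denumerable.eqv (E C)

/-- code of a raw vertex -/
def ι (a : VT) : ℕ := if h : Vok C a then σV C hne ⟨a, h⟩ else σV C hne ⟨none, trivial⟩

/-- code of a raw edge -/
def EC (η : VT) : ℕ := if h : Eok C η then τE C hne ⟨η, h⟩ else τE C hne ⟨none, trivial⟩

/-- the graph -/
def Γ : BasedGraph where
  edges := fun n => Sym2.map (ι C hne) (E0 C ((τE C hne).symm n).1)
  base := ι C hne none

lemma ι_ok {a : VT} (h : Vok C a) : ι C hne a = σV C hne ⟨a, h⟩ := dif_pos h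

lemma ι_inj {a b : VT} (ha : Vok C a) (hb : Vok C b) (h : ι C hne a = ι C hne b) :
    a = b := by
  rw [ι_ok C hne ha, ι_ok C hne hb] at h
  have := (σV C hne).injective h
  exact congrArg Subtype.val this

lemma ι_surj (w : ℕ) : ∃ a, Vok C a ∧ ι C hne a = w := by
  refine ⟨((σV C hne).symm w).1, ((σV C hne).symm w).2, ?_⟩
  rw [ι_ok C hne ((σV C hne).symm w).2]
  exact (σV C hne).apply_symm_apply w

@[simp] lemma base_eq : (Γ C hne).base = ι C hne none := rfl

lemma edges_EC {η : VT} (h : Eok C η) :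
    (Γ C hne).edges (EC C hne η) = Sym2.map (ι C hne) (E0 C η) := by
  rw [EC, dif_pos h]
  show Sym2.map _ (E0 C ((τE C hne).symm ((τE C hne) ⟨η, h⟩)).1) = _
  exact congrArg (fun x : E C => Sym2.map (ι C hne) (E0 C x.1)) ((τE C hne).symm_apply_apply ⟨η, h⟩)

lemma edges_inv (n : ℕ) : ∃ η, Eok C η ∧ EC C hne η = n ∧
    (Γ C hne).edges n = Sym2.map (ι C hne) (E0 C η) := by
  refine ⟨((τE C hne).symm n).1, ((τE C hne).symm n).2, ?_, rfl⟩
  rw [EC, dif_pos ((τE C hne).symm n).2]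
  exact (τE C hne).apply_symm_apply n

/-- level of a code -/
def lvlN (w : ℕ) : ℕ := lvlV (((σV C hne).symm w).1)

lemma lvlN_ι {a : VT} (h : Vok C a) : lvlN C hne (ι C hne a) = lvlV a := by
  rw [lvlN, ι_ok C hne h]
  exact congrArg (fun x : V C => lvlV x.1) ((σV C hne).symm_apply_apply ⟨a, h⟩)


/-! ### graph-specific adjacency -/

lemma adj_of_E0 {η a b : VT} (h : Eok C η) (hab : E0 C η = s(a, b)) :
    (Γ C hne).Adj (ι C hne a) (ι C hne b) := by
  refine ⟨EC C hne η, ?_⟩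
  rw [edges_EC C hne h, hab, Sym2.map_pair_eq]

lemma adj_inv {u v : ℕ} (h : (Γ C hne).Adj u v) :
    ∃ η a b, Eok C η ∧ E0 C η = s(a, b) ∧ Vok C a ∧ Vok C b ∧
      ι C hne a = u ∧ ι C hne b = v := by
  obtain ⟨e, he⟩ := h
  obtain ⟨η, hok, -, hedge⟩ := edges_inv C hne e
  rw [hedge] at he
  obtain ⟨p, hp⟩ := Quot.exists_rep (E0 C η)
  obtain ⟨a, b⟩ := p
  have hab : s(a, b) = E0 C η := hp
  rw [← hab, Sym2.map_pair_eq, Sym2.eq_iff] at he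
  rcases he with ⟨h1, h2⟩ | ⟨h1, h2⟩
  · exact ⟨η, a, b, hok, hab.symm, E0_ok C hok a (hab ▸ Sym2.mem_mk_left a b),
      E0_ok C hok b (hab ▸ Sym2.mem_mk_right a b), h1, h2⟩
  · exact ⟨η, b, a, hok, by rw [← hab, Sym2.eq_swap], E0_ok C hok b (hab ▸ Sym2.mem_mk_right a b),
      E0_ok C hok a (hab ▸ Sym2.mem_mk_left a b), h2, h1⟩

lemma adj_uv {s : List Bool} (hs : InT C s) :
    (Γ C hne).Adj (ι C hne (some (s,0))) (ι C hne (some (s,1))) :=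
  adj_of_E0 C hne (η := some (s,1)) ⟨hs, by have := enum_ge C s; omega⟩ rfl

lemma adj_vw {s : List Bool} (hs : InT C s) (hbr : br C s) :
    (Γ C hne).Adj (ι C hne (some (s,1))) (ι C hne (some (s,2))) :=
  adj_of_E0 C hne (η := some (s,2)) ⟨hs, by have := enum_ge C s; omega⟩ (by simp [E0, if_pos hbr])

lemma adj_wu {s : List Bool} (hs : InT C s) (hbr : br C s) :
    (Γ C hne).Adj (ι C hne (some (s,2))) (ι C hne (some (s,0))) :=
  adj_of_E0 C hne (η := some (s,3)) ⟨hs, by rw [enum, if_pos hbr]; omega⟩ rfl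

lemma adj_parent {s : List Bool} {b : Bool} (hs : InT C (b :: s)) :
    (Γ C hne).Adj (ι C hne (some (b :: s, 0))) (ι C hne (out C s b)) :=
  adj_of_E0 C hne (η := some (b :: s, 0)) ⟨hs, by have := enum_ge C (b :: s); omega⟩ rfl

lemma adj_base (h0 : InT C []) :
    (Γ C hne).Adj (ι C hne (some ([], 0))) (ι C hne none) :=
  adj_of_E0 C hne (η := some ([], 0)) ⟨h0, by have := enum_ge C ([] : List Bool); omega⟩ rfl

/-- `S` only contains codes of level at most `m` -/
def lowS (S : Set ℕ) (m : ℕ) : Prop := ∀ w ∈ S, lvlN C hne w ≤ m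

lemma notin_of_low {S : Set ℕ} {m : ℕ} (hS : lowS C hne S m) {a : VT}
    (ha : Vok C a) (hl : m < lvlV a) : ι C hne a ∉ S := by
  intro hmem
  have := hS _ hmem
  rw [lvlN_ι C hne ha] at this
  omega

lemma ra_gadget {S : Set ℕ} {m : ℕ} (hS : lowS C hne S m) {s : List Bool}
    (hs : InT C s) (hlen : m ≤ s.length) {i : ℕ} (hi : i < sz C s) :
    (Γ C hne).ReachAvoid S (ι C hne (some (s, i))) (ι C hne (some (s, 0))) := by
  have hlvl : ∀ j, m < lvlV (some (s, j)) := fun j => by simp [lvlV]; omega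
  have h0 : ι C hne (some (s,0)) ∉ S :=
    notin_of_low C hne hS ⟨hs, by have := sz_pos C s; omega⟩ (hlvl 0)
  match i with
  | 0 => exact ra_refl h0
  | 1 =>
    have h1 : ι C hne (some (s,1)) ∉ S :=
      notin_of_low C hne hS ⟨hs, by have := sz_pos C s; omega⟩ (hlvl 1)
    exact ra_adj (adj_symm (adj_uv C hne hs)) h1 h0
  | 2 =>
    have hbr : br C s := by by_contra hbr; rw [sz_of_not_br C hbr] at hi; omega
    have h2 : ι C hne (some (s,2)) ∉ S := notin_of_low C hne hS ⟨hs, hi⟩ (hlvl 2)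
    exact ra_adj (adj_wu C hne hs hbr) h2 h0
  | (j+3) => exact absurd hi (by have := sz_le C s; omega)

lemma out_lt_sz (s : List Bool) : (if br C s then (cond (b) 2 1) else 0) < sz C s := by
  by_cases hbr : br C s
  · rw [if_pos hbr, sz_of_br C hbr]; cases b <;> simp
  · rw [if_neg hbr, sz_of_not_br C hbr]; omega

lemma ra_out {S : Set ℕ} {m : ℕ} (hS : lowS C hne S m) {s : List Bool}
    (hs : InT C s) (hlen : m ≤ s.length) (b : Bool) :
    (Γ C hne).ReachAvoid S (ι C hne (some (s, 0))) (ι C hne (out C s b)) :=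
  ra_symm (ra_gadget C hne hS hs hlen (out_lt_sz C s))

lemma ra_parentstep {S : Set ℕ} {m : ℕ} (hS : lowS C hne S m) {s : List Bool} {b : Bool}
    (hs : InT C (b :: s)) (hlen : m ≤ s.length) :
    (Γ C hne).ReachAvoid S (ι C hne (some (s, 0))) (ι C hne (some (b :: s, 0))) := by
  refine ra_trans (ra_out C hne hS (InT_tail C hs) hlen b) ?_
  refine ra_adj (adj_symm (adj_parent C hne hs)) ?_ ?_
  · exact notin_of_low C hne hS (out_ok C (InT_tail C hs) b hs)
      (by simp [out, lvlV]; omega)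
  · exact notin_of_low C hne hS ⟨hs, by have := sz_pos C (b :: s); omega⟩
      (by simp [lvlV]; omega)

lemma path_up {S : Set ℕ} {m : ℕ} (hS : lowS C hne S m) {s : List Bool}
    (hs : InT C s) {i : ℕ} (hi : i < sz C s) (hlen : m ≤ s.length) :
    (Γ C hne).ReachAvoid S (ι C hne (some (s, i)))
      (ι C hne (some (s.drop (s.length - m), 0))) := by
  induction s generalizing i with
  | nil =>
    simpa using ra_gadget C hne hS hs (by simpa using hlen) hi
  | cons b t ih =>
    rcases Nat.lt_or_ge t.length m with hm | hm
    · have hdrop : (b :: t).length - m = 0 := by simp; omega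
      rw [hdrop, List.drop_zero]
      exact ra_gadget C hne hS hs hlen hi
    · have h1 : (Γ C hne).ReachAvoid S (ι C hne (some (b :: t, i))) (ι C hne (some (b :: t, 0))) :=
        ra_gadget C hne hS hs hlen hi
      have h2 := ra_symm (ra_parentstep C hne hS hs hm)
      have ht : InT C t := InT_tail C hs
      have h3 := ih ht (i := 0) (by have := sz_pos C t; omega) hm
      have hdrop : (b :: t).drop ((b :: t).length - m) = t.drop (t.length - m) := by
        have : (b :: t).length - m = (t.length - m) + 1 := by simp; omega
        rw [this, List.drop_succ_cons]
      rw [hdrop]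
      exact ra_trans (ra_trans h1 h2) h3

/-- stem of a code at height `m` -/
def stemN (m : ℕ) (w : ℕ) : List Bool := stemV m (((σV C hne).symm w).1)

lemma stemN_ι {m : ℕ} {a : VT} (h : Vok C a) :
    stemN C hne m (ι C hne a) = stemV m a := by
  rw [stemN, ι_ok C hne h]
  exact congrArg (fun x : V C => stemV m x.1) ((σV C hne).symm_apply_apply ⟨a, h⟩)

lemma stem_adj {m : ℕ} {η a b : VT} (hok : Eok C η) (ha : a ∈ E0 C η) (hb : b ∈ E0 C η)
    (hla : m < lvlV a) (hlb : m < lvlV b) : stemV m a = stemV m b := by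
  rcases η with _ | ⟨s, j⟩
  · simp only [E0, Sym2.mem_iff] at ha hb
    have : a = none := by rcases ha with h | h <;> exact h
    subst this; simp at hla
  · match j with
    | 0 =>
      rcases s with _ | ⟨c, t⟩
      · simp only [E0, pport, Sym2.mem_iff] at ha hb
        have key : ∀ d : VT, d = some ([], 0) ∨ d = none → stemV m d = [] := by
          rintro d (rfl | rfl) <;> simp
        rw [key a ha, key b hb]
      · simp only [E0, pport, out, Sym2.mem_iff] at ha hb
        have key : ∀ m, m ≤ t.length → stemV m (some (c :: t, 0)) = t.drop (t.length - m) := by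
          intro m hm
          simp only [stemV_some, List.length_cons]
          have h2 : t.length + 1 - m = (t.length - m) + 1 := by omega
          rw [h2, List.drop_succ_cons]
        rcases ha with rfl | rfl <;> rcases hb with rfl | rfl
        · rfl
        · have hm : m ≤ t.length := by simp only [lvlV_some] at hlb; omega
          rw [key m hm]; rfl
        · have hm : m ≤ t.length := by simp only [lvlV_some] at hla; omega
          rw [key m hm]; rfl
        · rfl
    | 1 =>
      simp only [E0, Sym2.mem_iff] at ha hb
      have key : ∀ d : VT, d = some (s, 0) ∨ d = some (s, 1) →
          stemV m d = s.drop (s.length - m) := by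
        rintro d (rfl | rfl) <;> rfl
      rw [key a ha, key b hb]
    | 2 =>
      by_cases hbr : br C s
      · rw [show E0 C (some (s,2)) = s(some (s,1), some (s,2)) from by
          simp [E0, if_pos hbr]] at ha hb
        simp only [Sym2.mem_iff] at ha hb
        have key : ∀ d : VT, d = some (s, 1) ∨ d = some (s, 2) →
            stemV m d = s.drop (s.length - m) := by
          rintro d (rfl | rfl) <;> rfl
        rw [key a ha, key b hb]
      · rw [show E0 C (some (s,2)) = s(some (s,1), some (s,1)) from by
          simp [E0, if_neg hbr]] at ha hb
        simp only [Sym2.mem_iff] at ha hb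
        have key : ∀ d : VT, d = some (s, 1) ∨ d = some (s, 1) →
            stemV m d = s.drop (s.length - m) := by
          rintro d (rfl | rfl) <;> rfl
        rw [key a ha, key b hb]
    | (k+3) =>
      simp only [E0, Sym2.mem_iff] at ha hb
      have key : ∀ d : VT, d = some (s, 2) ∨ d = some (s, 0) →
          stemV m d = s.drop (s.length - m) := by
        rintro d (rfl | rfl) <;> rfl
      rw [key a ha, key b hb]

/-- separation: a walk in the complement of all of levels `≤ m` preserves the stem -/
lemma sep {S : Set ℕ} {m : ℕ} (hfull : ∀ w, lvlN C hne w ≤ m → w ∈ S)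
    {u v : ℕ} (h : (Γ C hne).ReachAvoid S u v) :
    stemN C hne m u = stemN C hne m v := by
  refine (ra_invariant (fun z => stemN C hne m u = stemN C hne m z) ?_ h rfl)
  intro a b haS hbS hadj hP
  obtain ⟨η, a', b', hok, hab, ha', hb', rfl, rfl⟩ := adj_inv C hne hadj
  have hla : m < lvlV a' := by
    by_contra hc
    exact haS (hfull _ (by rw [lvlN_ι C hne ha']; omega))
  have hlb : m < lvlV b' := by
    by_contra hc
    exact hbS (hfull _ (by rw [lvlN_ι C hne hb']; omega))
  rw [hP, stemN_ι C hne ha', stemN_ι C hne hb']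
  exact stem_adj C hok (hab ▸ Sym2.mem_mk_left a' b') (hab ▸ Sym2.mem_mk_right a' b') hla hlb

/-- the finite set of codes of level at most `m` -/
lemma fin_low (m : ℕ) : {w : ℕ | lvlN C hne w ≤ m}.Finite := by
  have h1 : {a : VT | lvlV a ≤ m ∧ Vok C a}.Finite := by
    have : {a : VT | lvlV a ≤ m ∧ Vok C a} ⊆
        insert none ((fun p : List Bool × ℕ => some p) ''
          ({l : List Bool | l.length < m} ×ˢ {i : ℕ | i < 3})) := by
      rintro (_ | ⟨s, i⟩) ⟨hl, hok⟩
      · exact Set.mem_insert _ _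
      · refine Set.mem_insert_of_mem _ ⟨(s, i), ⟨?_, ?_⟩, rfl⟩
        · simpa [lvlV] using hl
        · exact lt_of_lt_of_le hok.2 (sz_le C s)
    exact Set.Finite.subset (Set.Finite.insert _ (Set.Finite.image _
      (Set.Finite.prod (List.finite_length_lt Bool m) (Set.finite_Iio 3)))) this
  have h2 : {v : V C | lvlV v.1 ≤ m}.Finite := by
    have := h1.preimage (f := fun v : V C => v.1) (Set.injOn_of_injective Subtype.val_injective)
    refine this.subset ?_
    intro v hv
    exact ⟨hv, v.2⟩
  have h3 : {w : ℕ | lvlN C hne w ≤ m} = (σV C hne) '' {v : V C | lvlV v.1 ≤ m} := by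
    ext w
    simp only [Set.mem_setOf_eq, Set.mem_image]
    constructor
    · intro h
      exact ⟨(σV C hne).symm w, h, by simp⟩
    · rintro ⟨v, hv, rfl⟩
      simpa [lvlN] using hv
  rw [h3]
  exact h2.image _

def Fm (m : ℕ) : Finset ℕ := (fin_low C hne m).toFinset

lemma mem_Fm {m w : ℕ} : w ∈ Fm C hne m ↔ lvlN C hne w ≤ m := by
  simp [Fm]

lemma Fm_mono {m m' : ℕ} (h : m ≤ m') : Fm C hne m ⊆ Fm C hne m' := by
  intro w hw
  rw [mem_Fm] at hw ⊢
  omega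

lemma low_Fm (m : ℕ) : lowS C hne (↑(Fm C hne m)) m := fun w hw => (mem_Fm C hne).1 hw


/-! ### degrees -/

/-- the unique child direction at a non-branching node -/
def bs (s : List Bool) : Bool := if InT C (true :: s) then true else false

lemma bs_spec {s : List Bool} (hs : InT C s) (hbr : ¬ br C s) :
    InT C (bs C s :: s) ∧ ∀ c, InT C (c :: s) → c = bs C s := by
  obtain ⟨c₀, hc₀⟩ := InT_child C hs
  by_cases ht : InT C (true :: s)
  · refine ⟨by simpa [bs, ht], ?_⟩
    intro c hc
    cases c
    · exact absurd ⟨hc, ht⟩ hbr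
    · simp [bs, ht]
  · have hf : InT C (false :: s) := by cases c₀ <;> [exact hc₀; exact absurd hc₀ ht]
    refine ⟨by simpa [bs, ht], ?_⟩
    intro c hc
    cases c
    · simp [bs, ht]
    · exact absurd hc ht

lemma pport_eq_some {t s : List Bool} {i : ℕ} :
    pport C t = some (s, i) ↔ ∃ c, t = c :: s ∧ i = (if br C s then cond c 2 1 else 0) := by
  cases t with
  | nil => simp [pport]
  | cons c t' =>
    simp only [pport, out, Option.some.injEq, Prod.mk.injEq]
    constructor
    · rintro ⟨rfl, rfl⟩; exact ⟨c, rfl, rfl⟩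
    · rintro ⟨c', hc, hi⟩
      rw [List.cons.injEq] at hc
      obtain ⟨rfl, rfl⟩ := hc
      exact ⟨rfl, hi.symm⟩

lemma EC_inj {η η' : VT} (hη : Eok C η) (hη' : Eok C η') (h : EC C hne η = EC C hne η') :
    η = η' := by
  rw [EC, dif_pos hη, EC, dif_pos hη'] at h
  exact congrArg Subtype.val ((τE C hne).injective h)

lemma inc_eq {a : VT} (ha : Vok C a) :
    {e : ℕ | (ι C hne a) ∈ (Γ C hne).edges e} =
      EC C hne '' {η | Eok C η ∧ a ∈ E0 C η} := by
  ext e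
  simp only [Set.mem_setOf_eq, Set.mem_image]
  constructor
  · intro h
    obtain ⟨η, hok, hec, hedge⟩ := edges_inv C hne e
    rw [hedge, Sym2.mem_map] at h
    obtain ⟨b, hb, hba⟩ := h
    have hbok := E0_ok C hok b hb
    rw [ι_inj C hne hbok ha hba] at hb
    exact ⟨η, ⟨hok, hb⟩, hec⟩
  · rintro ⟨η, ⟨hok, hmem⟩, rfl⟩
    rw [edges_EC C hne hok, Sym2.mem_map]
    exact ⟨a, hmem, rfl⟩

lemma loop_eq {a : VT} (ha : Vok C a) :
    {e : ℕ | (Γ C hne).edges e = s(ι C hne a, ι C hne a)} =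
      EC C hne '' {η | Eok C η ∧ E0 C η = s(a, a)} := by
  ext e
  simp only [Set.mem_setOf_eq, Set.mem_image]
  constructor
  · intro h
    obtain ⟨η, hok, hec, hedge⟩ := edges_inv C hne e
    rw [hedge] at h
    obtain ⟨p, hp⟩ := Quot.exists_rep (E0 C η)
    obtain ⟨b, c⟩ := p
    have hbc : E0 C η = s(b, c) := hp.symm
    rw [hbc, Sym2.map_pair_eq, Sym2.eq_iff] at h
    have hbok := E0_ok C hok b (hbc ▸ Sym2.mem_mk_left b c)
    have hcok := E0_ok C hok c (hbc ▸ Sym2.mem_mk_right b c)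
    have hb : b = a ∧ c = a := by
      rcases h with ⟨h1, h2⟩ | ⟨h1, h2⟩ <;>
        exact ⟨ι_inj C hne hbok ha h1, ι_inj C hne hcok ha h2⟩
    refine ⟨η, ⟨hok, by rw [hbc, hb.1, hb.2]⟩, hec⟩
  · rintro ⟨η, ⟨hok, hmem⟩, rfl⟩
    rw [edges_EC C hne hok, hmem, Sym2.map_pair_eq]

lemma ncard_img {A : Set VT} (hA : ∀ η ∈ A, Eok C η) :
    (EC C hne '' A).ncard = A.ncard :=
  Set.ncard_image_of_injOn (fun η hη η' hη' h => EC_inj C hne (hA η hη) (hA η' hη') h)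


lemma Eok_three {t : List Bool} {k : ℕ} (h : Eok C (some (t, k+3))) : br C t ∧ k = 0 := by
  obtain ⟨-, hk⟩ := h
  by_cases hbr : br C t
  · rw [enum, if_pos hbr] at hk; exact ⟨hbr, by omega⟩
  · rw [enum, if_neg hbr] at hk; omega

lemma sym2_diag_iff {α : Type*} {a b c : α} : s(a, b) = s(c, c) ↔ a = c ∧ b = c := by
  rw [Sym2.eq_iff]; tauto

lemma deg_aux (v : ℕ) : (Γ C hne).degree v =
    {e : ℕ | v ∈ (Γ C hne).edges e}.ncard +
    {e : ℕ | (Γ C hne).edges e = s(v, v)}.ncard := rfl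

lemma deg_none : (Γ C hne).degree (ι C hne none) = 3 := by
  have h0 : InT C [] := InT_nil C hne
  have h1 : {η | Eok C η ∧ (none : VT) ∈ E0 C η} = {none, some ([], 0)} := by
    ext η
    simp only [Set.mem_setOf_eq, Set.mem_insert_iff, Set.mem_singleton_iff]
    constructor
    · rintro ⟨hok, hmem⟩
      rcases η with _ | ⟨t, j⟩
      · exact Or.inl rfl
      · match j with
        | 0 =>
          simp only [E0, Sym2.mem_iff] at hmem
          rcases hmem with h | h
          · exact absurd h (by simp)
          · cases t with
            | nil => exact Or.inr rfl
            | cons c t' => exact absurd h.symm (by simp [pport, out])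
        | 1 => simp only [E0, Sym2.mem_iff] at hmem; rcases hmem with h | h <;> simp at h
        | 2 =>
          by_cases hbr : br C t <;>
            simp only [E0, hbr, if_true, if_false, Sym2.mem_iff] at hmem <;>
            rcases hmem with h | h <;> simp at h
        | (k+3) => simp only [E0, Sym2.mem_iff] at hmem; rcases hmem with h | h <;> simp at h
    · rintro (rfl | rfl)
      · exact ⟨trivial, by simp [E0]⟩
      · exact ⟨⟨h0, by have := enum_ge C ([] : List Bool); omega⟩, by simp [E0, pport]⟩
  have h2 : {η | Eok C η ∧ E0 C η = s((none : VT), none)} = {(none : VT)} := by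
    ext η
    simp only [Set.mem_setOf_eq, Set.mem_singleton_iff]
    constructor
    · rintro ⟨hok, hmem⟩
      rcases η with _ | ⟨t, j⟩
      · rfl
      · match j with
        | 0 => rw [E0, sym2_diag_iff] at hmem; exact absurd hmem.1 (by simp)
        | 1 => rw [E0, sym2_diag_iff] at hmem; exact absurd hmem.1 (by simp)
        | 2 =>
          rw [E0] at hmem
          split_ifs at hmem <;> rw [sym2_diag_iff] at hmem <;> exact absurd hmem.1 (by simp)
        | (k+3) => rw [E0, sym2_diag_iff] at hmem; exact absurd hmem.1 (by simp)
    · rintro rfl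
      exact ⟨trivial, rfl⟩
  rw [deg_aux, inc_eq C hne (a := none) trivial, loop_eq C hne (a := none) trivial, h1, h2,
    ncard_img C hne (by
      rintro η (rfl | rfl)
      · trivial
      · exact ⟨h0, by have := enum_ge C ([] : List Bool); omega⟩),
    ncard_img C hne (by rintro η rfl; trivial)]
  rw [Set.ncard_pair (by simp), Set.ncard_singleton]


lemma ncard3 {α : Type*} {x y z : α} (h1 : x ≠ y) (h2 : x ≠ z) (h3 : y ≠ z) :
    ({x, y, z} : Set α).ncard = 3 := by
  rw [Set.ncard_insert_of_notMem (by simp [h1, h2]) (Set.toFinite _), Set.ncard_pair h3]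

lemma deg_u {s : List Bool} (hs : InT C s) :
    (Γ C hne).degree (ι C hne (some (s, 0))) = 3 := by
  have hok : Vok C (some (s, 0)) := ⟨hs, by have := sz_pos C s; omega⟩
  have h2 : {η | Eok C η ∧ E0 C η = s(some (s, 0), some (s, 0))} = ∅ := by
    ext η
    simp only [Set.mem_setOf_eq, Set.mem_empty_iff_false, iff_false, not_and]
    intro hok'
    rcases η with _ | ⟨t, j⟩
    · rw [E0, sym2_diag_iff]; rintro ⟨h, -⟩; simp at h
    · match j with
      | 0 =>
        rw [E0, sym2_diag_iff]
        rintro ⟨h1, h2⟩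
        simp only [Option.some.injEq, Prod.mk.injEq] at h1
        rw [h1.1, pport_eq_some C] at h2
        obtain ⟨c, hc, -⟩ := h2
        exact List.cons_ne_self c s hc.symm
      | 1 => rw [E0, sym2_diag_iff]; rintro ⟨-, h⟩; simp at h
      | 2 =>
        rw [E0]; split_ifs <;> rw [sym2_diag_iff] <;> rintro ⟨h, -⟩ <;> simp at h
      | (k+3) => rw [E0, sym2_diag_iff]; rintro ⟨h, -⟩; simp at h
  by_cases hbr : br C s
  · have h1 : {η | Eok C η ∧ some (s, 0) ∈ E0 C η} =
        {some (s, 0), some (s, 1), some (s, 3)} := by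
      ext η
      simp only [Set.mem_setOf_eq, Set.mem_insert_iff, Set.mem_singleton_iff]
      constructor
      · rintro ⟨hok', hmem⟩
        rcases η with _ | ⟨t, j⟩
        · simp only [E0, Sym2.mem_iff] at hmem
          rcases hmem with h | h <;> simp at h
        · match j with
          | 0 =>
            simp only [E0, Sym2.mem_iff] at hmem
            rcases hmem with h | h
            · simp only [Option.some.injEq, Prod.mk.injEq] at h
              exact Or.inl (by rw [h.1])
            · rw [eq_comm, pport_eq_some C] at h
              obtain ⟨c, rfl, hc⟩ := h
              rw [if_pos hbr] at hc
              cases c <;> simp at hc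
          | 1 =>
            simp only [E0, Sym2.mem_iff] at hmem
            rcases hmem with h | h
            · simp only [Option.some.injEq, Prod.mk.injEq] at h
              exact Or.inr (Or.inl (by rw [h.1]))
            · simp at h
          | 2 =>
            rw [E0] at hmem
            split_ifs at hmem <;> simp only [Sym2.mem_iff] at hmem <;>
              rcases hmem with h | h <;> simp at h
          | (k+3) =>
            obtain ⟨hbrt, rfl⟩ := Eok_three C hok'
            simp only [E0, Sym2.mem_iff] at hmem
            rcases hmem with h | h
            · simp at h
            · simp only [Option.some.injEq, Prod.mk.injEq] at h
              exact Or.inr (Or.inr (by rw [h.1]))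
      · have he := enum_ge C s
        rintro (rfl | rfl | rfl)
        · exact ⟨⟨hs, by omega⟩, by simp [E0]⟩
        · exact ⟨⟨hs, by omega⟩, by simp [E0]⟩
        · exact ⟨⟨hs, by rw [enum, if_pos hbr]; omega⟩, by
            show some (s, 0) ∈ E0 C (some (s, 0+3))
            simp [E0]⟩
    rw [deg_aux, inc_eq C hne hok, loop_eq C hne hok, h1, h2]
    rw [ncard_img C hne (by
      have he := enum_ge C s
      rintro η (rfl | rfl | rfl)
      · exact ⟨hs, by omega⟩
      · exact ⟨hs, by omega⟩
      · exact ⟨hs, by rw [enum, if_pos hbr]; omega⟩)]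
    rw [ncard_img C hne (by rintro η ⟨⟩)]
    rw [ncard3 (by simp) (by simp) (by simp), Set.ncard_empty]
  · obtain ⟨hbs, huniq⟩ := bs_spec C hs hbr
    have h1 : {η | Eok C η ∧ some (s, 0) ∈ E0 C η} =
        {some (s, 0), some (s, 1), some (bs C s :: s, 0)} := by
      ext η
      simp only [Set.mem_setOf_eq, Set.mem_insert_iff, Set.mem_singleton_iff]
      constructor
      · rintro ⟨hok', hmem⟩
        rcases η with _ | ⟨t, j⟩
        · simp only [E0, Sym2.mem_iff] at hmem
          rcases hmem with h | h <;> simp at h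
        · match j with
          | 0 =>
            simp only [E0, Sym2.mem_iff] at hmem
            rcases hmem with h | h
            · simp only [Option.some.injEq, Prod.mk.injEq] at h
              exact Or.inl (by rw [h.1])
            · rw [eq_comm, pport_eq_some C] at h
              obtain ⟨c, rfl, hc⟩ := h
              have : c = bs C s := huniq c hok'.1
              subst this
              exact Or.inr (Or.inr rfl)
          | 1 =>
            simp only [E0, Sym2.mem_iff] at hmem
            rcases hmem with h | h
            · simp only [Option.some.injEq, Prod.mk.injEq] at h
              exact Or.inr (Or.inl (by rw [h.1]))
            · simp at h
          | 2 =>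
            rw [E0] at hmem
            split_ifs at hmem <;> simp only [Sym2.mem_iff] at hmem <;>
              rcases hmem with h | h <;> simp at h
          | (k+3) =>
            obtain ⟨hbrt, rfl⟩ := Eok_three C hok'
            simp only [E0, Sym2.mem_iff] at hmem
            rcases hmem with h | h
            · simp at h
            · simp only [Option.some.injEq, Prod.mk.injEq] at h
              exact absurd (h.1 ▸ hbrt) hbr
      · have he := enum_ge C s
        rintro (rfl | rfl | rfl)
        · exact ⟨⟨hs, by omega⟩, by simp [E0]⟩
        · exact ⟨⟨hs, by omega⟩, by simp [E0]⟩
        · refine ⟨⟨hbs, by have := enum_ge C (bs C s :: s); omega⟩, ?_⟩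
          simp [E0, pport, out, if_neg hbr]
    rw [deg_aux, inc_eq C hne hok, loop_eq C hne hok, h1, h2]
    rw [ncard_img C hne (by
      have he := enum_ge C s
      rintro η (rfl | rfl | rfl)
      · exact ⟨hs, by omega⟩
      · exact ⟨hs, by omega⟩
      · exact ⟨hbs, by have := enum_ge C (bs C s :: s); omega⟩)]
    rw [ncard_img C hne (by rintro η ⟨⟩)]
    rw [ncard3 (by simp) (by simp [(List.cons_ne_self (bs C s) s).symm])
      (by simp [(List.cons_ne_self (bs C s) s).symm]), Set.ncard_empty]


lemma deg_v {s : List Bool} (hs : InT C s) :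
    (Γ C hne).degree (ι C hne (some (s, 1))) = 3 := by
  have hok : Vok C (some (s, 1)) := ⟨hs, by have := sz_pos C s; omega⟩
  have he := enum_ge C s
  by_cases hbr : br C s
  · have h1 : {η | Eok C η ∧ some (s, 1) ∈ E0 C η} =
        {some (s, 1), some (s, 2), some (false :: s, 0)} := by
      ext η
      simp only [Set.mem_setOf_eq, Set.mem_insert_iff, Set.mem_singleton_iff]
      constructor
      · rintro ⟨hok', hmem⟩
        rcases η with _ | ⟨t, j⟩
        · simp only [E0, Sym2.mem_iff] at hmem
          rcases hmem with h | h <;> simp at h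
        · match j with
          | 0 =>
            simp only [E0, Sym2.mem_iff] at hmem
            rcases hmem with h | h
            · simp at h
            · rw [eq_comm, pport_eq_some C] at h
              obtain ⟨c, rfl, hc⟩ := h
              rw [if_pos hbr] at hc
              cases c
              · exact Or.inr (Or.inr rfl)
              · simp at hc
          | 1 =>
            simp only [E0, Sym2.mem_iff] at hmem
            rcases hmem with h | h
            · simp at h
            · simp only [Option.some.injEq, Prod.mk.injEq] at h
              exact Or.inl (by rw [h.1])
          | 2 =>
            rw [E0] at hmem
            split_ifs at hmem <;> simp only [Sym2.mem_iff] at hmem <;>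
              rcases hmem with h | h <;>
              simp only [Option.some.injEq, Prod.mk.injEq] at h <;>
              first
                | exact Or.inr (Or.inl (by rw [h.1]))
                | (exact absurd h.2 (by omega))
          | (k+3) =>
            simp only [E0, Sym2.mem_iff] at hmem
            rcases hmem with h | h <;> simp at h
      · rintro (rfl | rfl | rfl)
        · exact ⟨⟨hs, by omega⟩, by simp [E0]⟩
        · refine ⟨⟨hs, by omega⟩, ?_⟩
          show some (s,1) ∈ E0 C (some (s,2))
          simp [E0, if_pos hbr]
        · refine ⟨⟨hbr.1, by have := enum_ge C (false :: s); omega⟩, ?_⟩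
          simp [E0, pport, out, if_pos hbr]
    have h2 : {η | Eok C η ∧ E0 C η = s(some (s, 1), some (s, 1))} = ∅ := by
      ext η
      simp only [Set.mem_setOf_eq, Set.mem_empty_iff_false, iff_false, not_and]
      intro hok'
      rcases η with _ | ⟨t, j⟩
      · rw [E0, sym2_diag_iff]; rintro ⟨h, -⟩; simp at h
      · match j with
        | 0 =>
          rw [E0, sym2_diag_iff]; rintro ⟨h, -⟩; simp at h
        | 1 => rw [E0, sym2_diag_iff]; rintro ⟨h, -⟩; simp at h
        | 2 =>
          rw [E0]
          split_ifs with h'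
          · rw [sym2_diag_iff]; rintro ⟨-, h⟩; simp at h
          · rw [sym2_diag_iff]
            rintro ⟨h, -⟩
            simp only [Option.some.injEq, Prod.mk.injEq] at h
            exact absurd (h.1 ▸ hbr) h'
        | (k+3) => rw [E0, sym2_diag_iff]; rintro ⟨-, h⟩; simp at h
    rw [deg_aux, inc_eq C hne hok, loop_eq C hne hok, h1, h2]
    rw [ncard_img C hne (by
      rintro η (rfl | rfl | rfl)
      · exact ⟨hs, by omega⟩
      · exact ⟨hs, by omega⟩
      · exact ⟨hbr.1, by have := enum_ge C (false :: s); omega⟩)]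
    rw [ncard_img C hne (by rintro η ⟨⟩)]
    rw [ncard3 (by simp) (by simp [(List.cons_ne_self false s).symm])
      (by simp [(List.cons_ne_self false s).symm]), Set.ncard_empty]
  · have h1 : {η | Eok C η ∧ some (s, 1) ∈ E0 C η} = {some (s, 1), some (s, 2)} := by
      ext η
      simp only [Set.mem_setOf_eq, Set.mem_insert_iff, Set.mem_singleton_iff]
      constructor
      · rintro ⟨hok', hmem⟩
        rcases η with _ | ⟨t, j⟩
        · simp only [E0, Sym2.mem_iff] at hmem
          rcases hmem with h | h <;> simp at h
        · match j with
          | 0 =>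
            simp only [E0, Sym2.mem_iff] at hmem
            rcases hmem with h | h
            · simp at h
            · rw [eq_comm, pport_eq_some C] at h
              obtain ⟨c, rfl, hc⟩ := h
              rw [if_neg hbr] at hc
              simp at hc
          | 1 =>
            simp only [E0, Sym2.mem_iff] at hmem
            rcases hmem with h | h
            · simp at h
            · simp only [Option.some.injEq, Prod.mk.injEq] at h
              exact Or.inl (by rw [h.1])
          | 2 =>
            rw [E0] at hmem
            split_ifs at hmem <;> simp only [Sym2.mem_iff] at hmem <;>
              rcases hmem with h | h <;>
              simp only [Option.some.injEq, Prod.mk.injEq] at h <;>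
              first
                | exact Or.inr (by rw [h.1])
                | (exact absurd h.2 (by omega))
          | (k+3) =>
            simp only [E0, Sym2.mem_iff] at hmem
            rcases hmem with h | h <;> simp at h
      · rintro (rfl | rfl)
        · exact ⟨⟨hs, by omega⟩, by simp [E0]⟩
        · refine ⟨⟨hs, by omega⟩, ?_⟩
          show some (s,1) ∈ E0 C (some (s,2))
          simp [E0, if_neg hbr]
    have h2 : {η | Eok C η ∧ E0 C η = s(some (s, 1), some (s, 1))} = {some (s, 2)} := by
      ext η
      simp only [Set.mem_setOf_eq, Set.mem_singleton_iff]
      constructor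
      · rintro ⟨hok', hmem⟩
        rcases η with _ | ⟨t, j⟩
        · rw [E0, sym2_diag_iff] at hmem; exact absurd hmem.1 (by simp)
        · match j with
          | 0 => rw [E0, sym2_diag_iff] at hmem; exact absurd hmem.1 (by simp)
          | 1 => rw [E0, sym2_diag_iff] at hmem; exact absurd hmem.1 (by simp)
          | 2 =>
            rw [E0] at hmem
            split_ifs at hmem with h'
            · rw [sym2_diag_iff] at hmem
              exact absurd hmem.2 (by simp)
            · rw [sym2_diag_iff] at hmem
              have := hmem.1
              simp only [Option.some.injEq, Prod.mk.injEq] at this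
              rw [this.1]
          | (k+3) => rw [E0, sym2_diag_iff] at hmem; exact absurd hmem.2 (by simp)
      · rintro rfl
        refine ⟨⟨hs, by omega⟩, ?_⟩
        show E0 C (some (s,2)) = _
        simp [E0, if_neg hbr]
    rw [deg_aux, inc_eq C hne hok, loop_eq C hne hok, h1, h2]
    rw [ncard_img C hne (by rintro η (rfl | rfl) <;> exact ⟨hs, by omega⟩)]
    rw [ncard_img C hne (by rintro η rfl; exact ⟨hs, by omega⟩)]
    rw [Set.ncard_pair (by simp), Set.ncard_singleton]

lemma deg_w {s : List Bool} (hs : InT C s) (hbr : br C s) :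
    (Γ C hne).degree (ι C hne (some (s, 2))) = 3 := by
  have hok : Vok C (some (s, 2)) := ⟨hs, by rw [sz_of_br C hbr]; omega⟩
  have he := enum_ge C s
  have h1 : {η | Eok C η ∧ some (s, 2) ∈ E0 C η} =
      {some (s, 2), some (s, 3), some (true :: s, 0)} := by
    ext η
    simp only [Set.mem_setOf_eq, Set.mem_insert_iff, Set.mem_singleton_iff]
    constructor
    · rintro ⟨hok', hmem⟩
      rcases η with _ | ⟨t, j⟩
      · simp only [E0, Sym2.mem_iff] at hmem
        rcases hmem with h | h <;> simp at h
      · match j with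
        | 0 =>
          simp only [E0, Sym2.mem_iff] at hmem
          rcases hmem with h | h
          · simp at h
          · rw [eq_comm, pport_eq_some C] at h
            obtain ⟨c, rfl, hc⟩ := h
            rw [if_pos hbr] at hc
            cases c
            · simp at hc
            · exact Or.inr (Or.inr rfl)
        | 1 =>
          simp only [E0, Sym2.mem_iff] at hmem
          rcases hmem with h | h <;> simp at h
        | 2 =>
          rw [E0] at hmem
          split_ifs at hmem <;> simp only [Sym2.mem_iff] at hmem <;>
            rcases hmem with h | h <;>
            simp only [Option.some.injEq, Prod.mk.injEq] at h <;>
            first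
              | exact Or.inl (by rw [h.1])
              | (exact absurd h.2 (by omega))
        | (k+3) =>
          obtain ⟨hbrt, rfl⟩ := Eok_three C hok'
          simp only [E0, Sym2.mem_iff] at hmem
          rcases hmem with h | h
          · simp only [Option.some.injEq, Prod.mk.injEq] at h
            exact Or.inr (Or.inl (by rw [h.1]))
          · simp at h
    · rintro (rfl | rfl | rfl)
      · refine ⟨⟨hs, by omega⟩, ?_⟩
        show some (s,2) ∈ E0 C (some (s,2))
        simp [E0, if_pos hbr]
      · refine ⟨⟨hs, by rw [enum, if_pos hbr]; omega⟩, ?_⟩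
        show some (s,2) ∈ E0 C (some (s,0+3))
        simp [E0]
      · refine ⟨⟨hbr.2, by have := enum_ge C (true :: s); omega⟩, ?_⟩
        simp [E0, pport, out, if_pos hbr]
  have h2 : {η | Eok C η ∧ E0 C η = s(some (s, 2), some (s, 2))} = ∅ := by
    ext η
    simp only [Set.mem_setOf_eq, Set.mem_empty_iff_false, iff_false, not_and]
    intro hok'
    rcases η with _ | ⟨t, j⟩
    · rw [E0, sym2_diag_iff]; rintro ⟨h, -⟩; simp at h
    · match j with
      | 0 => rw [E0, sym2_diag_iff]; rintro ⟨h, -⟩; simp at h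
      | 1 => rw [E0, sym2_diag_iff]; rintro ⟨h, -⟩; simp at h
      | 2 =>
        rw [E0]; split_ifs <;> rw [sym2_diag_iff] <;> rintro ⟨h, -⟩ <;> simp at h
      | (k+3) => rw [E0, sym2_diag_iff]; rintro ⟨-, h⟩; simp at h
  rw [deg_aux, inc_eq C hne hok, loop_eq C hne hok, h1, h2]
  rw [ncard_img C hne (by
    rintro η (rfl | rfl | rfl)
    · exact ⟨hs, by omega⟩
    · exact ⟨hs, by rw [enum, if_pos hbr]; omega⟩
    · exact ⟨hbr.2, by have := enum_ge C (true :: s); omega⟩)]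
  rw [ncard_img C hne (by rintro η ⟨⟩)]
  rw [ncard3 (by simp) (by simp [(List.cons_ne_self true s).symm])
    (by simp [(List.cons_ne_self true s).symm]), Set.ncard_empty]

lemma regular3 : (Γ C hne).Regular 3 := by
  constructor
  · intro v
    obtain ⟨a, ha, rfl⟩ := ι_surj C hne v
    rw [inc_eq C hne ha]
    apply Set.Finite.image
    rcases a with _ | ⟨t, i⟩
    · refine Set.Finite.subset (Set.Finite.insert none
        (Set.Finite.image (fun p : List Bool × ℕ => some p)
          (Set.Finite.prod (Set.finite_singleton ([] : List Bool))
          (Set.finite_Iio 4)))) ?_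
      rintro (_ | ⟨u, j⟩) ⟨hok, hmem⟩
      · exact Set.mem_insert _ _
      · refine Set.mem_insert_of_mem _ ⟨(u, j), ⟨?_, lt_of_lt_of_le hok.2 (by rw [enum]; split <;> omega)⟩, rfl⟩
        match j with
        | 0 =>
          simp only [E0, Sym2.mem_iff] at hmem
          rcases hmem with h | h
          · simp at h
          · cases u with
            | nil => rfl
            | cons c u' => exact absurd h.symm (by simp [pport, out])
        | 1 => simp only [E0, Sym2.mem_iff] at hmem; rcases hmem with h | h <;> simp at h
        | 2 =>
          rw [E0] at hmem; split_ifs at hmem <;> simp only [Sym2.mem_iff] at hmem <;>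
            rcases hmem with h | h <;> simp at h
        | (k+3) => simp only [E0, Sym2.mem_iff] at hmem; rcases hmem with h | h <;> simp at h
    · refine Set.Finite.subset (Set.Finite.insert none
        (Set.Finite.image (fun p : List Bool × ℕ => some p) (Set.Finite.prod
          (Set.Finite.insert t (Set.Finite.insert (false :: t) (Set.finite_singleton (true :: t))))
          (Set.finite_Iio 4)))) ?_
      rintro (_ | ⟨u, j⟩) ⟨hok, hmem⟩
      · exact Set.mem_insert _ _
      · refine Set.mem_insert_of_mem _ ⟨(u, j), ⟨?_, lt_of_lt_of_le hok.2 (by rw [enum]; split <;> omega)⟩, rfl⟩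
        have keyu : ∀ i', some (t, i) = some (u, i') →
            u ∈ ({t, false :: t, true :: t} : Set (List Bool)) := by
          intro i' h
          simp only [Option.some.injEq, Prod.mk.injEq] at h
          rw [← h.1]; exact Set.mem_insert _ _
        have keyp : some (t, i) = pport C u →
            u ∈ ({t, false :: t, true :: t} : Set (List Bool)) := by
          intro h
          rw [eq_comm, pport_eq_some C] at h
          obtain ⟨c, rfl, -⟩ := h
          cases c
          · exact Set.mem_insert_of_mem _ (Set.mem_insert _ _)
          · exact Set.mem_insert_of_mem _ (Set.mem_insert_of_mem _ rfl)
        match j with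
        | 0 =>
          simp only [E0, Sym2.mem_iff] at hmem
          rcases hmem with h | h
          · exact keyu 0 h
          · exact keyp h
        | 1 =>
          simp only [E0, Sym2.mem_iff] at hmem
          rcases hmem with h | h
          · exact keyu 0 h
          · exact keyu 1 h
        | 2 =>
          rw [E0] at hmem; split_ifs at hmem <;> simp only [Sym2.mem_iff] at hmem <;>
            rcases hmem with h | h
          · exact keyu 1 h
          · exact keyu 2 h
          · exact keyu 1 h
          · exact keyu 1 h
        | (k+3) =>
          simp only [E0, Sym2.mem_iff] at hmem
          rcases hmem with h | h
          · exact keyu 2 h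
          · exact keyu 0 h
  · intro v
    obtain ⟨a, ha, rfl⟩ := ι_surj C hne v
    rcases a with _ | ⟨t, i⟩
    · exact deg_none C hne
    · obtain ⟨ht, hi⟩ := ha
      have h3 := sz_le C t
      match i with
      | 0 => exact deg_u C hne ht
      | 1 => exact deg_v C hne ht
      | 2 =>
        refine deg_w C hne ht ?_
        by_contra hbr
        rw [sz_of_not_br C hbr] at hi
        omega
      | (k+3) => omega


/-! ### connectivity -/

lemma reach_base_aux : ∀ (t : List Bool), InT C t → ∀ i, i < sz C t →
    (Γ C hne).ReachAvoid ∅ (ι C hne (some (t, i))) (ι C hne none)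
  | [], ht, i, hi => by
    refine ra_trans (ra_gadget C hne (m := 0) (fun w hw => absurd hw (Set.notMem_empty w)) ht
      (Nat.zero_le _) hi) ?_
    exact ra_adj (adj_base C hne ht) (Set.notMem_empty _) (Set.notMem_empty _)
  | b :: t, ht, i, hi => by
    have ht' : InT C t := InT_tail C ht
    refine ra_trans (ra_gadget C hne (m := 0) (fun w hw => absurd hw (Set.notMem_empty w)) ht
      (Nat.zero_le _) hi) ?_
    refine ra_trans (ra_symm (ra_parentstep C hne (m := 0)
      (fun w hw => absurd hw (Set.notMem_empty w)) ht (Nat.zero_le _))) ?_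
    exact reach_base_aux t ht' 0 (by have := sz_pos C t; omega)

lemma reach_base {a : VT} (ha : Vok C a) :
    (Γ C hne).ReachAvoid ∅ (ι C hne a) (ι C hne none) := by
  rcases a with _ | ⟨t, i⟩
  · exact ra_refl (Set.notMem_empty _)
  · exact reach_base_aux C hne t ha.1 i ha.2

lemma connected : (Γ C hne).Connected := by
  intro u v
  obtain ⟨a, ha, rfl⟩ := ι_surj C hne u
  obtain ⟨b, hb, rfl⟩ := ι_surj C hne v
  have h := ra_trans (reach_base C hne ha) (ra_symm (reach_base C hne hb))
  obtain ⟨n, f, h0, hn, -, hadj⟩ := h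
  exact ⟨n, f, h0, hn, hadj⟩

/-! ### ends -/

/-- code of the root vertex of the gadget at `t` -/
def UC (t : List Bool) : ℕ := ι C hne (some (t, 0))

lemma UC_junk {t : List Bool} (ht : ¬ InT C t) : UC C hne t = ι C hne none := by
  rw [UC, ι, dif_neg (fun h => ht h.1), ι]
  split <;> rfl

lemma e_true_notMem {e : EndSpace (Γ C hne)} {S : Finset ℕ} {w : ℕ}
    (hw : e.1 S w = true) : w ∉ (S : Set ℕ) := by
  obtain ⟨v₀, hv₀, hiff⟩ := e.2.1 S
  exact ra_notMem_right ((hiff w).1 hw)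

lemma e_true_of_ra {e : EndSpace (Γ C hne)} {S : Finset ℕ} {w w' : ℕ}
    (hw : e.1 S w = true) (h : (Γ C hne).ReachAvoid ↑S w w') : e.1 S w' = true := by
  obtain ⟨v₀, hv₀, hiff⟩ := e.2.1 S
  exact (hiff w').2 (ra_trans ((hiff w).1 hw) h)

lemma witness_node (e : EndSpace (Γ C hne)) (m : ℕ) :
    ∃ r, InT C r ∧ r.length = m ∧ e.1 (Fm C hne m) (UC C hne r) = true ∧
      ∀ t, InT C t → t.length = m → e.1 (Fm C hne m) (UC C hne t) = true → t = r := by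
  obtain ⟨v, hv, hiff⟩ := e.2.1 (Fm C hne m)
  have hvlvl : m < lvlN C hne v := by
    by_contra h
    exact hv ((mem_Fm C hne).2 (by omega))
  obtain ⟨a, haok, rfl⟩ := ι_surj C hne v
  rw [lvlN_ι C hne haok] at hvlvl
  rcases a with _ | ⟨s, i⟩
  · simp at hvlvl
  · obtain ⟨hs, hi⟩ := haok
    have hlen : m ≤ s.length := by simp at hvlvl; omega
    refine ⟨s.drop (s.length - m), InT_drop C hs _, by simp; omega, ?_, ?_⟩
    · exact (hiff _).2 (path_up C hne (low_Fm C hne m) hs hi hlen)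
    · intro t ht htl htrue
      have h1 := (hiff _).1 htrue
      have h2 := sep C hne (fun w hw => (mem_Fm C hne).2 hw) h1
      have hVokt : Vok C (some (t, 0)) := Vok_u C ht
      rw [stemN_ι C hne (Vok_some C hs hi)] at h2
      rw [UC, stemN_ι C hne hVokt] at h2
      simp only [stemV_some] at h2
      rw [htl] at h2
      simpa using h2.symm

/-- the canonical branch of an end -/
def nod (e : EndSpace (Γ C hne)) : ℕ → List Bool
  | 0 => []
  | m+1 => (if e.1 (Fm C hne (m+1)) (UC C hne (true :: nod e m)) = true then true
      else false) :: nod e m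

lemma nod_spec (e : EndSpace (Γ C hne)) : ∀ m, InT C (nod C hne e m) ∧
    (nod C hne e m).length = m ∧ e.1 (Fm C hne m) (UC C hne (nod C hne e m)) = true := by
  intro m
  induction m with
  | zero =>
    obtain ⟨r, hr, hrl, hrt, -⟩ := witness_node C hne e 0
    have : r = [] := List.length_eq_zero_iff.1 hrl
    subst this
    exact ⟨InT_nil C hne, rfl, hrt⟩
  | succ m ih =>
    obtain ⟨hm1, hm2, hm3⟩ := ih
    obtain ⟨r, hr, hrl, hrt, hru⟩ := witness_node C hne e (m+1)
    cases r with
    | nil => simp at hrl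
    | cons c t =>
    have htl : t.length = m := by simpa using hrl
    -- the tail of r is nod e m
    have hcompat : e.1 (Fm C hne m) (UC C hne (c :: t)) = true :=
      e.2.2 _ _ (Fm_mono C hne (Nat.le_succ m)) _ hrt
    have hra : (Γ C hne).ReachAvoid ↑(Fm C hne m) (UC C hne (c :: t)) (UC C hne t) := by
      have := path_up C hne (low_Fm C hne m) hr (i := 0)
        (by have := sz_pos C (c :: t); omega) (by simp; omega)
      have hdrop : (c :: t).drop ((c :: t).length - m) = t := by
        simp only [List.length_cons, htl]
        simp
      rwa [hdrop] at this
    have htail : t = nod C hne e m := by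
      obtain ⟨r', hr', hrl', hrt', hru'⟩ := witness_node C hne e m
      rw [hru' t (InT_tail C hr) htl (e_true_of_ra C hne hcompat hra)]
      rw [hru' (nod C hne e m) hm1 hm2 hm3]
    subst htail
    show InT C (nod C hne e (m+1)) ∧ _
    have hnodeq : nod C hne e (m+1) = c :: nod C hne e m := by
      show (if e.1 (Fm C hne (m+1)) (UC C hne (true :: nod C hne e m)) = true then true
        else false) :: nod C hne e m = _
      congr 1
      cases c
      · -- show the `true` branch is false
        by_cases htr : e.1 (Fm C hne (m+1)) (UC C hne (true :: nod C hne e m)) = true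
        · exfalso
          by_cases hInT : InT C (true :: nod C hne e m)
          · have := hru _ hInT (by simpa using hm2) htr
            simp at this
          · rw [UC_junk C hne hInT] at htr
            refine e_true_notMem C hne htr ?_
            refine (mem_Fm C hne).2 ?_
            rw [lvlN_ι C hne (Vok_none C)]
            simp
        · simp [htr]
      · simp [hrt]
    rw [hnodeq]
    exact ⟨hr, by simpa using hrl, hrt⟩

lemma nod_unique {e : EndSpace (Γ C hne)} {m : ℕ} {t : List Bool} (ht : InT C t)
    (htl : t.length = m) (htrue : e.1 (Fm C hne m) (UC C hne t) = true) :
    t = nod C hne e m := by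
  obtain ⟨r, hr, hrl, hrt, hru⟩ := witness_node C hne e m
  obtain ⟨h1, h2, h3⟩ := nod_spec C hne e m
  rw [hru t ht htl htrue, hru _ h1 h2 h3]

/-- characterization of the component of an end outside an arbitrary finite set -/
lemma e_char (e : EndSpace (Γ C hne)) (S : Finset ℕ) {m : ℕ}
    (hSm : ∀ w ∈ S, lvlN C hne w ≤ m) (w : ℕ) :
    e.1 S w = true ↔ (Γ C hne).ReachAvoid ↑S (UC C hne (nod C hne e m)) w := by
  have hsub : S ⊆ Fm C hne m := fun w hw => (mem_Fm C hne).2 (hSm w hw)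
  obtain ⟨h1, h2, h3⟩ := nod_spec C hne e m
  have htrue : e.1 S (UC C hne (nod C hne e m)) = true := e.2.2 _ _ hsub _ h3
  obtain ⟨v₀, hv₀, hiff⟩ := e.2.1 S
  rw [hiff]
  have hv₀nod := (hiff _).1 htrue
  constructor
  · intro h
    exact ra_trans (ra_symm hv₀nod) h
  · intro h
    exact ra_trans hv₀nod h


lemma nod_succ (e : EndSpace (Γ C hne)) (k : ℕ) :
    ∃ c, nod C hne e (k+1) = c :: nod C hne e k := ⟨_, rfl⟩

/-- the ray of a branch, outside a low set -/
lemma ray {S : Set ℕ} {m : ℕ} (hS : lowS C hne S m) {x : ℕ → Bool} (hx : x ∈ C)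
    {a b : ℕ} (hma : m ≤ a) (hab : a ≤ b) :
    (Γ C hne).ReachAvoid S (UC C hne (pre x a)) (UC C hne (pre x b)) := by
  induction b, hab using Nat.le_induction with
  | base =>
    exact ra_refl (notin_of_low C hne hS (Vok_u C (InT_pre C hx a)) (by simp; omega))
  | succ b hb ih =>
    refine ra_trans ih ?_
    exact ra_parentstep C hne hS (show InT C (x b :: pre x b) from InT_pre C hx (b+1))
      (by simp; omega)

/-- the ray of an end, outside a low set -/
lemma nod_ray {S : Set ℕ} {m : ℕ} (hS : lowS C hne S m) (e : EndSpace (Γ C hne))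
    {a b : ℕ} (hma : m ≤ a) (hab : a ≤ b) :
    (Γ C hne).ReachAvoid S (UC C hne (nod C hne e a)) (UC C hne (nod C hne e b)) := by
  induction b, hab using Nat.le_induction with
  | base =>
    refine ra_refl (notin_of_low C hne hS (Vok_u C (nod_spec C hne e a).1) ?_)
    simp [(nod_spec C hne e a).2.1]; omega
  | succ b hb ih =>
    refine ra_trans ih ?_
    obtain ⟨c, hc⟩ := nod_succ C hne e b
    rw [hc]
    refine ra_parentstep C hne hS (hc ▸ (nod_spec C hne e (b+1)).1) ?_
    rw [(nod_spec C hne e b).2.1]; omega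

def mS (S : Finset ℕ) : ℕ := S.sup (lvlN C hne)

lemma low_mS (S : Finset ℕ) : lowS C hne ↑S (mS C hne S) := fun w hw => Finset.le_sup hw

def ψf (x : ℕ → Bool) : Finset ℕ → ℕ → Bool := fun S w =>
  decide ((Γ C hne).ReachAvoid ↑S (UC C hne (pre x (mS C hne S + 1))) w)

lemma ψf_mem {x : ℕ → Bool} (hx : x ∈ C) :
    (∀ S : Finset ℕ, ∃ v ∉ (S : Set ℕ), ∀ w, ψf C hne x S w = true ↔
        (Γ C hne).ReachAvoid (↑S) v w) ∧
      ∀ S T : Finset ℕ, S ⊆ T → ∀ w, ψf C hne x T w = true → ψf C hne x S w = true := by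
  constructor
  · intro S
    refine ⟨UC C hne (pre x (mS C hne S + 1)), ?_, ?_⟩
    · exact notin_of_low C hne (low_mS C hne S)
        (Vok_u C (InT_pre C hx _)) (by simp only [lvlV_some, pre_length]; omega)
    · intro w
      simp [ψf]
  · intro S T hST w htrue
    rw [ψf, decide_eq_true_eq] at htrue
    rw [ψf, decide_eq_true_eq]
    have hm : mS C hne S ≤ mS C hne T := Finset.sup_mono hST
    refine ra_trans (ray C hne (low_mS C hne S) hx (a := mS C hne S + 1)
      (b := mS C hne T + 1) (by omega) (by omega)) ?_
    exact ra_mono (by exact_mod_cast hST) htrue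

def ψ' (x : C) : EndSpace (Γ C hne) := ⟨ψf C hne x.1, ψf_mem C hne x.2⟩

def φf (e : EndSpace (Γ C hne)) : ℕ → Bool := fun k => (nod C hne e (k+1)).headI

lemma pre_φf (e : EndSpace (Γ C hne)) (k : ℕ) : pre (φf C hne e) k = nod C hne e k := by
  induction k with
  | zero => rfl
  | succ k ih =>
    obtain ⟨c, hc⟩ := nod_succ C hne e k
    show φf C hne e k :: pre (φf C hne e) k = _
    rw [ih, φf, hc]
    rfl

lemma φf_mem (hcl : IsClosed C) (e : EndSpace (Γ C hne)) : φf C hne e ∈ C := by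
  have hseq : ∀ k, ∃ x, x ∈ C ∧ pre x k = nod C hne e k := by
    intro k
    obtain ⟨h1, h2, -⟩ := nod_spec C hne e k
    obtain ⟨x, hx, hp⟩ := h1
    exact ⟨x, hx, by rwa [h2] at hp⟩
  choose xs hxC hxpre using hseq
  have htend : Filter.Tendsto xs Filter.atTop (nhds (φf C hne e)) := by
    rw [tendsto_pi_nhds]
    intro i
    refine (tendsto_const_nhds (x := φf C hne e i)).congr' ?_
    rw [Filter.eventuallyEq_iff_exists_mem]
    refine ⟨Set.Ici (i+1), Filter.mem_atTop _, ?_⟩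
    intro k hk
    have h1 : pre (xs k) k = pre (φf C hne e) k := by rw [hxpre, pre_φf]
    exact ((pre_eq_iff _ _ k).1 h1 i hk).symm
  exact hcl.mem_of_tendsto htend (Filter.Eventually.of_forall hxC)

lemma nod_ψ {x : ℕ → Bool} (hx : x ∈ C) (k : ℕ) :
    nod C hne (ψ' C hne ⟨x, hx⟩) k = pre x k := by
  refine (nod_unique C hne (InT_pre C hx k) (pre_length x k) ?_).symm
  show ψf C hne x (Fm C hne k) (UC C hne (pre x k)) = true
  rw [ψf, decide_eq_true_eq]
  have hkM : k ≤ mS C hne (Fm C hne k) + 1 := by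
    cases k with
    | zero => omega
    | succ k' =>
      have hlvl : lvlN C hne (UC C hne (pre x k')) = k' + 1 := by
        rw [UC, lvlN_ι C hne (Vok_u C (InT_pre C hx k'))]; simp
      have hmem : UC C hne (pre x k') ∈ Fm C hne (k'+1) := by
        rw [mem_Fm, hlvl]
      have hsup := Finset.le_sup (f := lvlN C hne) hmem
      rw [hlvl] at hsup
      show k' + 1 ≤ mS C hne (Fm C hne (k'+1)) + 1
      rw [mS]
      omega
  exact ra_symm (ray C hne (S := ↑(Fm C hne k)) (m := k) (low_Fm C hne k) hx (le_refl k) hkM)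

lemma φψ (x : C) : φf C hne (ψ' C hne x) = x.1 := by
  funext k
  obtain ⟨x, hx⟩ := x
  rw [φf, nod_ψ C hne hx (k+1)]
  rfl

lemma φ_inj {e₁ e₂ : EndSpace (Γ C hne)} (h : φf C hne e₁ = φf C hne e₂) : e₁ = e₂ := by
  have hnod : ∀ k, nod C hne e₁ k = nod C hne e₂ k := by
    intro k
    rw [← pre_φf, h, pre_φf]
  apply Subtype.ext
  funext S w
  have h1 := e_char C hne e₁ S (m := mS C hne S) (fun w hw => Finset.le_sup hw) w
  have h2 := e_char C hne e₂ S (m := mS C hne S) (fun w hw => Finset.le_sup hw) w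
  rw [hnod] at h1
  rw [Bool.eq_iff_iff, h1, h2]


/-! ### continuity -/

lemma cont_eval (S : Finset ℕ) (w : ℕ) :
    Continuous (fun e : EndSpace (Γ C hne) => e.1 S w) :=
  (continuous_apply w).comp ((continuous_apply S).comp continuous_subtype_val)

lemma locconst_nod (m : ℕ) :
    IsLocallyConstant (fun e : EndSpace (Γ C hne) => nod C hne e m) := by
  induction m with
  | zero => exact IsLocallyConstant.of_constant _ (fun _ _ => rfl)
  | succ m ih =>
    rw [IsLocallyConstant.iff_exists_open]
    intro e₀
    refine ⟨{e : EndSpace (Γ C hne) | nod C hne e m = nod C hne e₀ m} ∩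
      {e : EndSpace (Γ C hne) |
        e.1 (Fm C hne (m+1)) (UC C hne (true :: nod C hne e₀ m)) =
          e₀.1 (Fm C hne (m+1)) (UC C hne (true :: nod C hne e₀ m))},
      ?_, ⟨rfl, rfl⟩, ?_⟩
    · refine IsOpen.inter (ih.isOpen_fiber _) ?_
      exact (cont_eval C hne (Fm C hne (m+1)) (UC C hne (true :: nod C hne e₀ m))).isOpen_preimage
        {e₀.1 (Fm C hne (m+1)) (UC C hne (true :: nod C hne e₀ m))} (isOpen_discrete _)
    · rintro e ⟨h1, h2⟩
      show (if e.1 (Fm C hne (m+1)) (UC C hne (true :: nod C hne e m)) = true then true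
          else false) :: nod C hne e m =
        (if e₀.1 (Fm C hne (m+1)) (UC C hne (true :: nod C hne e₀ m)) = true then true
          else false) :: nod C hne e₀ m
      rw [h1, h2]

lemma cont_φf : Continuous (φf C hne) := by
  apply continuous_pi
  intro k
  exact ((locconst_nod C hne (k+1)).comp List.headI).continuous

lemma cont_ψ' : Continuous (ψ' C hne) := by
  apply Continuous.subtype_mk
  apply continuous_pi
  intro S
  apply continuous_pi
  intro w
  apply IsLocallyConstant.continuous
  rw [IsLocallyConstant.iff_exists_open]
  intro x₀
  refine ⟨⋂ i ∈ Finset.range (mS C hne S + 1), {x : C | x.1 i = x₀.1 i}, ?_, ?_, ?_⟩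
  · refine isOpen_biInter_finset ?_
    intro i _
    have : Continuous (fun x : C => x.1 i) :=
      (continuous_apply i).comp continuous_subtype_val
    exact this.isOpen_preimage ({x₀.1 i} : Set Bool) (isOpen_discrete _)
  · simp
  · intro x hx
    simp only [Set.mem_iInter, Finset.mem_range, Set.mem_setOf_eq] at hx
    have hpre : pre x.1 (mS C hne S + 1) = pre x₀.1 (mS C hne S + 1) :=
      (pre_eq_iff _ _ _).2 (fun i hi => hx i hi)
    show ψf C hne x.1 S w = ψf C hne x₀.1 S w
    rw [ψf, ψf, hpre]


/-! ### rank -/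

lemma ι_ne {a b : VT} (ha : Vok C a) (hb : Vok C b) (h : a ≠ b) :
    ι C hne a ≠ ι C hne b := fun hh => h (ι_inj C hne ha hb hh)

lemma EC_ne {a b : VT} (ha : Eok C a) (hb : Eok C b) (h : a ≠ b) :
    EC C hne a ≠ EC C hne b := fun hh => h (EC_inj C hne ha hb hh)

def gadV (t : List Bool) : Finset ℕ :=
  if br C t then {ι C hne (some (t,0)), ι C hne (some (t,1)), ι C hne (some (t,2))}
  else {ι C hne (some (t,0)), ι C hne (some (t,1))}

def gadE (t : List Bool) : Finset ℕ :=
  if br C t then {EC C hne (some (t,1)), EC C hne (some (t,2)), EC C hne (some (t,3))}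
  else {EC C hne (some (t,1)), EC C hne (some (t,2))}

lemma mem_gadV_iff {t : List Bool} (ht : InT C t) {w : ℕ} :
    w ∈ gadV C hne t ↔ ∃ i < sz C t, w = ι C hne (some (t, i)) := by
  by_cases hbr : br C t
  · rw [gadV, if_pos hbr]
    have h3 := sz_of_br C hbr
    simp only [Finset.mem_insert, Finset.mem_singleton]
    constructor
    · rintro (rfl | rfl | rfl)
      exacts [⟨0, by omega, rfl⟩, ⟨1, by omega, rfl⟩, ⟨2, by omega, rfl⟩]
    · rintro ⟨i, hi, rfl⟩
      match i with
      | 0 => exact Or.inl rfl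
      | 1 => exact Or.inr (Or.inl rfl)
      | 2 => exact Or.inr (Or.inr rfl)
      | (j+3) => omega
  · rw [gadV, if_neg hbr]
    have h2 := sz_of_not_br C hbr
    simp only [Finset.mem_insert, Finset.mem_singleton]
    constructor
    · rintro (rfl | rfl)
      exacts [⟨0, by omega, rfl⟩, ⟨1, by omega, rfl⟩]
    · rintro ⟨i, hi, rfl⟩
      match i with
      | 0 => exact Or.inl rfl
      | 1 => exact Or.inr rfl
      | (j+2) => omega

lemma gadV_lvl {t : List Bool} (ht : InT C t) {w : ℕ} (hw : w ∈ gadV C hne t) :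
    lvlN C hne w = t.length + 1 := by
  obtain ⟨i, hi, rfl⟩ := (mem_gadV_iff C hne ht).1 hw
  rw [lvlN_ι C hne (Vok_some C ht hi)]
  simp

lemma gadV_card {t : List Bool} (ht : InT C t) : (gadV C hne t).card = sz C t := by
  by_cases hbr : br C t
  · rw [gadV, if_pos hbr, sz_of_br C hbr]
    have h3 := sz_of_br C hbr
    have h01 := ι_ne C hne (Vok_some C ht (i := 0) (by omega)) (Vok_some C ht (i := 1) (by omega)) (by simp)
    have h02 := ι_ne C hne (Vok_some C ht (i := 0) (by omega)) (Vok_some C ht (i := 2) (by omega)) (by simp)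
    have h12 := ι_ne C hne (Vok_some C ht (i := 1) (by omega)) (Vok_some C ht (i := 2) (by omega)) (by simp)
    rw [Finset.card_insert_of_notMem (by simp [h01, h02]),
      Finset.card_insert_of_notMem (by simp [h12]), Finset.card_singleton]
  · rw [gadV, if_neg hbr, sz_of_not_br C hbr]
    have h2 := sz_of_not_br C hbr
    have h01 := ι_ne C hne (Vok_some C ht (i := 0) (by omega)) (Vok_some C ht (i := 1) (by omega)) (by simp)
    rw [Finset.card_insert_of_notMem (by simp [h01]), Finset.card_singleton]

lemma Eok_int {t : List Bool} (ht : InT C t) {j : ℕ} (h1 : 1 ≤ j) (hj : j < enum C t) :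
    Eok C (some (t, j)) := ⟨ht, hj⟩

lemma gadE_card {t : List Bool} (ht : InT C t) : (gadE C hne t).card = sz C t := by
  have he := enum_ge C t
  by_cases hbr : br C t
  · rw [gadE, if_pos hbr, sz_of_br C hbr]
    have h4 : enum C t = 4 := if_pos hbr
    have h12 := EC_ne C hne (Eok_int C ht (j := 1) (by omega) (by omega))
      (Eok_int C ht (j := 2) (by omega) (by omega)) (by simp)
    have h13 := EC_ne C hne (Eok_int C ht (j := 1) (by omega) (by omega))
      (Eok_int C ht (j := 3) (by omega) (by omega)) (by simp)
    have h23 := EC_ne C hne (Eok_int C ht (j := 2) (by omega) (by omega))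
      (Eok_int C ht (j := 3) (by omega) (by omega)) (by simp)
    rw [Finset.card_insert_of_notMem (by simp [h12, h13]),
      Finset.card_insert_of_notMem (by simp [h23]), Finset.card_singleton]
  · rw [gadE, if_neg hbr, sz_of_not_br C hbr]
    have h12 := EC_ne C hne (Eok_int C ht (j := 1) (by omega) (by omega))
      (Eok_int C ht (j := 2) (by omega) (by omega)) (by simp)
    rw [Finset.card_insert_of_notMem (by simp [h12]), Finset.card_singleton]

lemma mem_edges_pair {η a b : VT} (hok : Eok C η) (hE : E0 C η = s(a, b)) {v : ℕ}
    (hv : v ∈ (Γ C hne).edges (EC C hne η)) : v = ι C hne a ∨ v = ι C hne b := by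
  rw [edges_EC C hne hok, hE, Sym2.map_pair_eq, Sym2.mem_iff] at hv
  exact hv

lemma gadE_spec {t : List Bool} (ht : InT C t) :
    ∀ ed ∈ gadE C hne t, (∀ v, v ∈ (Γ C hne).edges ed → v ∈ gadV C hne t) ∧
      ∃ u i, Eok C (some (u, i)) ∧ ed = EC C hne (some (u, i)) ∧ u.length = t.length ∧
        1 ≤ i := by
  intro ed hed
  have he := enum_ge C t
  have hmem : ∀ i < sz C t, ι C hne (some (t, i)) ∈ gadV C hne t := by
    intro i hi
    exact (mem_gadV_iff C hne ht).2 ⟨i, hi, rfl⟩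
  by_cases hbr : br C t
  · have h3 := sz_of_br C hbr
    have h4 : enum C t = 4 := if_pos hbr
    rw [gadE, if_pos hbr] at hed
    simp only [Finset.mem_insert, Finset.mem_singleton] at hed
    rcases hed with rfl | rfl | rfl
    · refine ⟨?_, t, 1, Eok_int C ht (by omega) (by omega), rfl, rfl, by omega⟩
      intro v hv
      rcases mem_edges_pair C hne (Eok_int C ht (j := 1) (by omega) (by omega)) rfl hv with
        rfl | rfl
      exacts [hmem 0 (by omega), hmem 1 (by omega)]
    · refine ⟨?_, t, 2, Eok_int C ht (by omega) (by omega), rfl, rfl, by omega⟩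
      intro v hv
      rcases mem_edges_pair C hne (Eok_int C ht (j := 2) (by omega) (by omega))
        (show E0 C (some (t, 2)) = s(some (t,1), some (t,2)) from by simp [E0, if_pos hbr]) hv with
        rfl | rfl
      exacts [hmem 1 (by omega), hmem 2 (by omega)]
    · refine ⟨?_, t, 3, Eok_int C ht (by omega) (by omega), rfl, rfl, by omega⟩
      intro v hv
      rcases mem_edges_pair C hne (Eok_int C ht (j := 3) (by omega) (by omega))
        (show E0 C (some (t, 0+3)) = s(some (t,2), some (t,0)) from rfl) hv with rfl | rfl
      exacts [hmem 2 (by omega), hmem 0 (by omega)]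
  · have h2 := sz_of_not_br C hbr
    rw [gadE, if_neg hbr] at hed
    simp only [Finset.mem_insert, Finset.mem_singleton] at hed
    rcases hed with rfl | rfl
    · refine ⟨?_, t, 1, Eok_int C ht (by omega) (by omega), rfl, rfl, by omega⟩
      intro v hv
      rcases mem_edges_pair C hne (Eok_int C ht (j := 1) (by omega) (by omega)) rfl hv with
        rfl | rfl
      exacts [hmem 0 (by omega), hmem 1 (by omega)]
    · refine ⟨?_, t, 2, Eok_int C ht (by omega) (by omega), rfl, rfl, by omega⟩
      intro v hv
      rcases mem_edges_pair C hne (Eok_int C ht (j := 2) (by omega) (by omega))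
        (show E0 C (some (t, 2)) = s(some (t,1), some (t,1)) from by simp [E0, if_neg hbr]) hv with
        rfl | rfl
      exacts [hmem 1 (by omega), hmem 1 (by omega)]

lemma rank_ge (e : EndSpace (Γ C hne)) (S : Finset ℕ) (n : ℕ) :
    RankGe (Γ C hne) {w | e.1 S w = true} n := by
  classical
  set m := mS C hne S with hm
  have hSm : ∀ w ∈ S, lvlN C hne w ≤ m := fun w hw => Finset.le_sup hw
  have hlow : lowS C hne ↑S m := hSm
  set t : ℕ → List Bool := fun j => nod C hne e (m + j) with htdef
  have htIn : ∀ j, InT C (t j) := fun j => (nod_spec C hne e (m+j)).1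
  have htlen : ∀ j, (t j).length = m + j := fun j => (nod_spec C hne e (m+j)).2.1
  -- all gadget vertices along the ray are in the component
  have hgadA : ∀ j, ∀ w ∈ gadV C hne (t j), e.1 S w = true := by
    intro j w hw
    obtain ⟨i, hi, rfl⟩ := (mem_gadV_iff C hne (htIn j)).1 hw
    refine (e_char C hne e S hSm _).2 ?_
    refine ra_trans (nod_ray C hne hlow e (le_refl m) (Nat.le_add_right m j)) ?_
    exact ra_symm (ra_gadget C hne hlow (htIn j) (by rw [htlen j]; omega) hi)
  -- the connecting (parent) edge
  have hpar : ∀ j, ∃ c, t (j+1) = c :: t j := by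
    intro j
    have : m + (j+1) = (m + j) + 1 := by omega
    rw [htdef]
    simp only
    rw [this]
    exact nod_succ C hne e (m + j)
  have hparE : ∀ j, Eok C (some (t (j+1), 0)) ∧
      (∀ v, v ∈ (Γ C hne).edges (EC C hne (some (t (j+1), 0))) →
        v ∈ gadV C hne (t (j+1)) ∪ gadV C hne (t j)) := by
    intro j
    obtain ⟨c, hc⟩ := hpar j
    have hok : Eok C (some (t (j+1), 0)) :=
      ⟨htIn (j+1), by have := enum_ge C (t (j+1)); omega⟩
    refine ⟨hok, ?_⟩
    intro v hv
    have hEeq : E0 C (some (t (j+1), 0)) = s(some (t (j+1), 0), out C (t j) c) := by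
      rw [hc]
      rfl
    rcases mem_edges_pair C hne hok hEeq hv with rfl | rfl
    · exact Finset.mem_union_left _ ((mem_gadV_iff C hne (htIn (j+1))).2
        ⟨0, by have := sz_pos C (t (j+1)); omega, rfl⟩)
    · refine Finset.mem_union_right _ ((mem_gadV_iff C hne (htIn j)).2
        ⟨_, out_lt_sz C (t j), rfl⟩)
  -- main induction
  have main : ∀ k, ∃ VF EF : Finset ℕ,
      (∀ w ∈ VF, e.1 S w = true) ∧
      (∀ ed ∈ EF, ∀ v, v ∈ (Γ C hne).edges ed → v ∈ VF) ∧
      (VF.card + k ≤ EF.card) ∧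
      (∀ w ∈ VF, lvlN C hne w ≤ m + k + 1) ∧
      (gadV C hne (t k) ⊆ VF) ∧
      (∀ ed ∈ EF, ∃ u i, Eok C (some (u, i)) ∧ ed = EC C hne (some (u, i)) ∧
        u.length ≤ m + k) := by
    intro k
    induction k with
    | zero =>
      refine ⟨gadV C hne (t 0), gadE C hne (t 0), hgadA 0, ?_, ?_, ?_, le_refl _, ?_⟩
      · intro ed hed v hv
        exact ((gadE_spec C hne (htIn 0)) ed hed).1 v hv
      · rw [gadV_card C hne (htIn 0), gadE_card C hne (htIn 0)]; omega
      · intro w hw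
        rw [gadV_lvl C hne (htIn 0) hw, htlen 0]
      · intro ed hed
        obtain ⟨-, u, i, hok, hed', hlen, -⟩ := (gadE_spec C hne (htIn 0)) ed hed
        exact ⟨u, i, hok, hed', by rw [hlen, htlen 0]⟩
    | succ k ih =>
      obtain ⟨VF, EF, hVA, hEcl, hcard, hVlvl, hgadsub, hEform⟩ := ih
      obtain ⟨hpok, hpcl⟩ := hparE k
      refine ⟨VF ∪ gadV C hne (t (k+1)),
        EF ∪ (gadE C hne (t (k+1)) ∪ {EC C hne (some (t (k+1), 0))}), ?_, ?_, ?_, ?_, ?_, ?_⟩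
      · intro w hw
        rcases Finset.mem_union.1 hw with h | h
        exacts [hVA w h, hgadA (k+1) w h]
      · intro ed hed v hv
        rcases Finset.mem_union.1 hed with h | h
        · exact Finset.mem_union_left _ (hEcl ed h v hv)
        · rcases Finset.mem_union.1 h with h | h
          · exact Finset.mem_union_right _ (((gadE_spec C hne (htIn (k+1))) ed h).1 v hv)
          · rw [Finset.mem_singleton] at h
            subst h
            rcases Finset.mem_union.1 (hpcl v hv) with h | h
            · exact Finset.mem_union_right _ h
            · exact Finset.mem_union_left _ (hgadsub h)
      · -- cards
        have hdisjV : Disjoint VF (gadV C hne (t (k+1))) := by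
          rw [Finset.disjoint_right]
          intro w hw hw'
          have h1 := gadV_lvl C hne (htIn (k+1)) hw
          have h2 := hVlvl w hw'
          rw [htlen (k+1)] at h1
          omega
        have hlenE : ∀ ed ∈ gadE C hne (t (k+1)) ∪ {EC C hne (some (t (k+1), 0))},
            ed ∉ EF := by
          intro ed hed hmem
          obtain ⟨u, i, huok, rfl, hulen⟩ := hEform ed hmem
          rcases Finset.mem_union.1 hed with h | h
          · obtain ⟨-, u', i', hok', heq, hlen', -⟩ := (gadE_spec C hne (htIn (k+1))) _ h
            have := EC_inj C hne huok hok' heq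
            simp only [Option.some.injEq, Prod.mk.injEq] at this
            have : u.length = u'.length := by rw [this.1]
            rw [hlen', htlen (k+1)] at this
            omega
          · rw [Finset.mem_singleton] at h
            have := EC_inj C hne huok hpok h
            simp only [Option.some.injEq, Prod.mk.injEq] at this
            have : u.length = (t (k+1)).length := by rw [this.1]
            rw [htlen (k+1)] at this
            omega
        have hdisjE : Disjoint EF (gadE C hne (t (k+1)) ∪ {EC C hne (some (t (k+1), 0))}) := by
          rw [Finset.disjoint_right]
          exact hlenE
        have hpnotin : EC C hne (some (t (k+1), 0)) ∉ gadE C hne (t (k+1)) := by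
          intro hmem
          obtain ⟨-, u', i', hok', heq, -, hge⟩ := (gadE_spec C hne (htIn (k+1))) _ hmem
          have h2 := EC_inj C hne hpok hok' heq
          simp only [Option.some.injEq, Prod.mk.injEq] at h2
          omega
        rw [Finset.card_union_of_disjoint hdisjV, Finset.card_union_of_disjoint hdisjE,
          Finset.card_union_of_disjoint (Finset.disjoint_singleton_right.2 hpnotin),
          gadV_card C hne (htIn (k+1)), gadE_card C hne (htIn (k+1)), Finset.card_singleton]
        omega
      · intro w hw
        rcases Finset.mem_union.1 hw with h | h
        · have := hVlvl w h; omega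
        · rw [gadV_lvl C hne (htIn (k+1)) h, htlen (k+1)]
      · exact Finset.subset_union_right
      · intro ed hed
        rcases Finset.mem_union.1 hed with h | h
        · obtain ⟨u, i, hok, heq, hlen⟩ := hEform ed h
          exact ⟨u, i, hok, heq, by omega⟩
        · rcases Finset.mem_union.1 h with h | h
          · obtain ⟨-, u, i, hok, heq, hlen, -⟩ := (gadE_spec C hne (htIn (k+1))) ed h
            exact ⟨u, i, hok, heq, by rw [hlen, htlen (k+1)]⟩
          · rw [Finset.mem_singleton] at h
            exact ⟨t (k+1), 0, hpok, h, by rw [htlen (k+1)]⟩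
  obtain ⟨VF, EF, hVA, hEcl, hcard, -, -, -⟩ := main n
  exact ⟨VF, EF, fun w hw => hVA w hw, hEcl, by omega⟩

end

end CantorG3
/-- every nonempty closed subset `C` of Cantor space is the end space of
a connected, infinite, 3-regular graph all of whose ends are accumulated by loops. -/
theorem closed_subset_realized_in_G3 (C : Set (ℕ → Bool))
    (hne : C.Nonempty) (hcl : IsClosed C) :
    ∃ G : BasedGraph, G.Connected ∧ G.Regular 3 ∧
      Nonempty (EndSpace G ≃ₜ C) ∧ ∀ e : EndSpace G, AccumulatedByLoops G e := by
  classical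
  refine ⟨CantorG3.Γ C hne, CantorG3.connected C hne, CantorG3.regular3 C hne, ?_, ?_⟩
  · refine ⟨Homeomorph.mk (Equiv.mk
      (fun e => ⟨CantorG3.φf C hne e, CantorG3.φf_mem C hne hcl e⟩)
      (CantorG3.ψ' C hne) ?_ ?_) ?_ ?_⟩
    · intro e
      exact CantorG3.φ_inj C hne (CantorG3.φψ C hne _)
    · intro x
      exact Subtype.ext (CantorG3.φψ C hne x)
    · exact Continuous.subtype_mk (CantorG3.cont_φf C hne) _
    · exact CantorG3.cont_ψ' C hne
  · intro e S n
    exact CantorG3.rank_ge C hne e S n
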